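/- arXiv:math/9912114 — 7 statements merged into one kernel-verified Lean document; each statement's English description precedes it below -/
import Mathlib

section
/- For every function f : ℂ² → ℂ, every h ∈ ℂ, and every λ = (λ₁,λ₂) ∈ ℂ² with θ(λ₊) ≠ 0 and θ(λ₋) ≠ 0, one has (M̃₁f)(λ₁,λ₂) = (H₊(H₋f))(λ₁,λ₂) = (H₋(H₊f))(λ₁,λ₂); that is, the operator M̃₁ factorizes as the product of the two commuting A₁-type difference operators H₊ and H₋. -/
open Complex

/-- The Jacobi theta function θ₁(z|τ). -/
noncomputable def th1 (τ z : ℂ) : ℂ :=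
  ∑' k : ℤ, exp (2 * (Real.pi : ℂ) * I *
    ((z + 1/2) * ((k : ℂ) + 1/2) + ((k : ℂ) + 1/2)^2 * τ / 2))

/-- The difference operator `M̃₁` of type `C₂`. -/
noncomputable def M1t (τ h : ℂ) (f : ℂ × ℂ → ℂ) (l : ℂ × ℂ) : ℂ :=
  th1 τ (l.1 + l.2 - h) * th1 τ (l.1 - l.2 - h)
      / (th1 τ (l.1 + l.2) * th1 τ (l.1 - l.2)) * f (l.1 + h, l.2)
  + th1 τ (l.1 + l.2 + h) * th1 τ (l.1 - l.2 + h)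
      / (th1 τ (l.1 + l.2) * th1 τ (l.1 - l.2)) * f (l.1 - h, l.2)
  + th1 τ (l.1 + l.2 - h) * th1 τ (l.1 - l.2 + h)
      / (th1 τ (l.1 + l.2) * th1 τ (l.1 - l.2)) * f (l.1, l.2 + h)
  + th1 τ (l.1 + l.2 + h) * th1 τ (l.1 - l.2 - h)
      / (th1 τ (l.1 + l.2) * th1 τ (l.1 - l.2)) * f (l.1, l.2 - h)

/-- The `A₁`-type difference operator `H₊`. -/
noncomputable def Hp (τ h : ℂ) (f : ℂ × ℂ → ℂ) (l : ℂ × ℂ) : ℂ :=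
  th1 τ (l.1 + l.2 - h) / th1 τ (l.1 + l.2) * f (l.1 + h/2, l.2 + h/2)
  + th1 τ (l.1 + l.2 + h) / th1 τ (l.1 + l.2) * f (l.1 - h/2, l.2 - h/2)

/-- The `A₁`-type difference operator `H₋`. -/
noncomputable def Hm (τ h : ℂ) (f : ℂ × ℂ → ℂ) (l : ℂ × ℂ) : ℂ :=
  th1 τ (l.1 - l.2 - h) / th1 τ (l.1 - l.2) * f (l.1 + h/2, l.2 - h/2)
  + th1 τ (l.1 - l.2 + h) / th1 τ (l.1 - l.2) * f (l.1 - h/2, l.2 + h/2)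

/-- Lemma 5 ("split"), first identity: `M̃₁ = H₊H₋ = H₋H₊`. -/
theorem stmt_1 (τ : ℂ) (hτ : 0 < τ.im) (h : ℂ) (f : ℂ × ℂ → ℂ) (l : ℂ × ℂ)
    (hp : th1 τ (l.1 + l.2) ≠ 0) (hm : th1 τ (l.1 - l.2) ≠ 0) :
    M1t τ h f l = Hp τ h (Hm τ h f) l ∧ M1t τ h f l = Hm τ h (Hp τ h f) l := by
  constructor <;>
  · simp only [M1t, Hp, Hm]
    ring_nf
end

section
/- For every function f : ℂ² → ℂ, every h ∈ ℂ, and every λ = (λ₁,λ₂) ∈ ℂ² such that θ(λ₊), θ(λ₋), θ(λ₊+h), θ(λ₊−h), θ(λ₋+h), θ(λ₋−h) are all nonzero, one has (M̃₂f)(λ₁,λ₂) = (H₊(H₊f))(λ₁,λ₂) + (H₋(H₋f))(λ₁,λ₂); that is, M̃₂ = H₊² + H₋². -/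
open Complex

/-- The difference operator `M̃₂` of type `C₂`. -/
noncomputable def M2t (τ h : ℂ) (f : ℂ × ℂ → ℂ) (l : ℂ × ℂ) : ℂ :=
  (∑ ε ∈ ({1, -1} : Finset ℤ), ∑ ε' ∈ ({1, -1} : Finset ℤ),
    th1 τ ((ε : ℂ) * l.1 + (ε' : ℂ) * l.2 - h)
      / th1 τ ((ε : ℂ) * l.1 + (ε' : ℂ) * l.2 + h)
      * f (l.1 + (ε : ℂ) * h, l.2 + (ε' : ℂ) * h))
  + (∑ ε ∈ ({1, -1} : Finset ℤ), ∑ ε' ∈ ({1, -1} : Finset ℤ),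
      th1 τ ((ε : ℂ) * l.1 + (ε' : ℂ) * l.2 - h)
        * th1 τ ((ε : ℂ) * l.1 + (ε' : ℂ) * l.2 + 2 * h)
        / (th1 τ ((ε : ℂ) * l.1 + (ε' : ℂ) * l.2)
            * th1 τ ((ε : ℂ) * l.1 + (ε' : ℂ) * l.2 + h))) * f l

lemma key (A B Ap Am Bp Bm A2p A2m B2p B2m F0 Fpp Fpm Fmp Fmm : ℂ)
 (hA : A≠0)(hB : B≠0)(hAp : Ap≠0)(hAm : Am≠0)(hBp : Bp≠0)(hBm : Bm≠0) :
 Am/Ap*Fpp + Bm/Bp*Fpm + (Bp/Bm*Fmp + Ap/Am*Fmm) + (Am*A2p/(A*Ap) + Bm*B2p/(B*Bp) + (Bp*B2m/(B*Bm) + Ap*A2m/(A*Am)))*F0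
 = Am/A*(A/Ap*Fpp + A2p/Ap*F0) + Ap/A*(A2m/Am*F0 + A/Am*Fmm) + (Bm/B*(B/Bp*Fpm + B2p/Bp*F0) + Bp/B*(B2m/Bm*F0 + B/Bm*Fmp)) := by
  field_simp
  ring

lemma th1_odd (τ z : ℂ) : th1 τ (-z) = - th1 τ z := by
  unfold th1
  rw [← tsum_neg, ← (Equiv.subLeft (-1 : ℤ)).tsum_eq]
  congr 1
  funext k
  simp only [Equiv.subLeft_apply]
  rw [show (2 * (Real.pi:ℂ) * I * ((-z + 1/2) * (((-1 - k : ℤ):ℂ) + 1/2) + (((-1 - k : ℤ):ℂ) + 1/2)^2 * τ / 2)) = (2 * (Real.pi:ℂ) * I * ((z + 1/2) * ((k:ℂ) + 1/2) + ((k:ℂ) + 1/2)^2 * τ / 2)) + ((-k - 1 : ℤ):ℂ) * (2 * Real.pi * I) + Real.pi * I by push_cast; ring]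
  rw [exp_add, exp_add, exp_int_mul_two_pi_mul_I, exp_pi_mul_I]
  ring


lemma th1_odd' (τ a b : ℂ) (hab : a = -b) : th1 τ a = - th1 τ b := by
  rw [hab, th1_odd]

set_option maxHeartbeats 2000000 in
/-- Lemma 5 ("split"), second identity: `M̃₂ = H₊² + H₋²`. -/
theorem stmt_2 (τ : ℂ) (hτ : 0 < τ.im) (h : ℂ) (f : ℂ × ℂ → ℂ) (l : ℂ × ℂ)
    (hp : th1 τ (l.1 + l.2) ≠ 0) (hm : th1 τ (l.1 - l.2) ≠ 0)
    (hpp : th1 τ (l.1 + l.2 + h) ≠ 0) (hpm : th1 τ (l.1 + l.2 - h) ≠ 0)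
    (hmp : th1 τ (l.1 - l.2 + h) ≠ 0) (hmm : th1 τ (l.1 - l.2 - h) ≠ 0) :
    M2t τ h f l = Hp τ h (Hp τ h f) l + Hm τ h (Hm τ h f) l := by
  simp only [M2t, Hp, Hm, show ({1, -1} : Finset ℤ) = {1, -1} from rfl,
    Finset.sum_insert (by decide : (1:ℤ) ∉ ({-1} : Finset ℤ)), Finset.sum_singleton,
    Int.cast_one, Int.cast_neg, one_mul, neg_one_mul]
  rw [show (l.1 + -l.2 - h : ℂ) = l.1 - l.2 - h by ring]
  rw [show (l.1 + -l.2 + h : ℂ) = l.1 - l.2 + h by ring]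
  rw [show (l.1 + -l.2 + 2 * h : ℂ) = l.1 - l.2 + 2*h by ring]
  rw [show (l.1 + -l.2 : ℂ) = l.1 - l.2 by ring]
  rw [show (l.1 + h / 2 + (l.2 + h / 2) - h : ℂ) = l.1 + l.2 by ring]
  rw [show (l.1 + h / 2 + (l.2 + h / 2) + h : ℂ) = l.1 + l.2 + 2*h by ring]
  rw [show (l.1 + h / 2 + (l.2 + h / 2) : ℂ) = l.1 + l.2 + h by ring]
  rw [show (l.1 - h / 2 + (l.2 - h / 2) - h : ℂ) = l.1 + l.2 - 2*h by ring]
  rw [show (l.1 - h / 2 + (l.2 - h / 2) + h : ℂ) = l.1 + l.2 by ring]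
  rw [show (l.1 - h / 2 + (l.2 - h / 2) : ℂ) = l.1 + l.2 - h by ring]
  rw [show (l.1 + h / 2 - (l.2 - h / 2) - h : ℂ) = l.1 - l.2 by ring]
  rw [show (l.1 + h / 2 - (l.2 - h / 2) + h : ℂ) = l.1 - l.2 + 2*h by ring]
  rw [show (l.1 + h / 2 - (l.2 - h / 2) : ℂ) = l.1 - l.2 + h by ring]
  rw [show (l.1 - h / 2 - (l.2 + h / 2) - h : ℂ) = l.1 - l.2 - 2*h by ring]
  rw [show (l.1 - h / 2 - (l.2 + h / 2) + h : ℂ) = l.1 - l.2 by ring]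
  rw [show (l.1 - h / 2 - (l.2 + h / 2) : ℂ) = l.1 - l.2 - h by ring]
  rw [show (l.1 + h / 2 + h / 2 : ℂ) = l.1 + h by ring]
  rw [show (l.2 + h / 2 + h / 2 : ℂ) = l.2 + h by ring]
  rw [show (l.1 + h / 2 - h / 2 : ℂ) = l.1 by ring]
  rw [show (l.2 + h / 2 - h / 2 : ℂ) = l.2 by ring]
  rw [show (l.1 - h / 2 + h / 2 : ℂ) = l.1 by ring]
  rw [show (l.2 - h / 2 + h / 2 : ℂ) = l.2 by ring]
  rw [show (l.1 - h / 2 - h / 2 : ℂ) = l.1 - h by ring]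
  rw [show (l.2 - h / 2 - h / 2 : ℂ) = l.2 - h by ring]
  rw [show (l.1 + -h : ℂ) = l.1 - h by ring]
  rw [show (l.2 + -h : ℂ) = l.2 - h by ring]
  rw [th1_odd' τ (-l.1 + l.2 - h) (l.1 - l.2 + h) (by ring)]
  rw [th1_odd' τ (-l.1 + l.2 + 2 * h) (l.1 - l.2 - 2*h) (by ring)]
  rw [th1_odd' τ (-l.1 + l.2 + h) (l.1 - l.2 - h) (by ring)]
  rw [th1_odd' τ (-l.1 + l.2) (l.1 - l.2) (by ring)]
  rw [th1_odd' τ (-l.1 + -l.2 - h) (l.1 + l.2 + h) (by ring)]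
  rw [th1_odd' τ (-l.1 + -l.2 + 2 * h) (l.1 + l.2 - 2*h) (by ring)]
  rw [th1_odd' τ (-l.1 + -l.2 + h) (l.1 + l.2 - h) (by ring)]
  rw [th1_odd' τ (-l.1 + -l.2) (l.1 + l.2) (by ring)]
  simp only [Prod.mk.eta]
  set A := th1 τ (l.1 + l.2) with hA
  set B := th1 τ (l.1 - l.2) with hB
  set Ap := th1 τ (l.1 + l.2 + h) with hAp
  set Am := th1 τ (l.1 + l.2 - h) with hAm
  set Bp := th1 τ (l.1 - l.2 + h) with hBp
  set Bm := th1 τ (l.1 - l.2 - h) with hBm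
  set A2p := th1 τ (l.1 + l.2 + 2*h) with hA2p
  set A2m := th1 τ (l.1 + l.2 - 2*h) with hA2m
  set B2p := th1 τ (l.1 - l.2 + 2*h) with hB2p
  set B2m := th1 τ (l.1 - l.2 - 2*h) with hB2m
  clear_value A B Ap Am Bp Bm A2p A2m B2p B2m
  simp only [neg_mul_neg, neg_div_neg_eq]
  exact key A B Ap Am Bp Bm A2p A2m B2p B2m (f l) (f (l.1+h,l.2+h)) (f (l.1+h,l.2-h))
    (f (l.1-h,l.2+h)) (f (l.1-h,l.2-h)) hp hm hpp hpm hmp hmm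
end

section
/- For each i ∈ {2,3,4} and all z, h ∈ ℂ, the entire-function identity θ₁(h|τ)·θ_i(h|τ)·[θ₁(z−h|τ)·θ_i(z+h|τ) + θ₁(z+h|τ)·θ_i(z−h|τ)] = θ₁(2h|τ)·θ_i(0|τ)·θ₁(z|τ)·θ_i(z|τ) holds. Equivalently, whenever θ₁(z|τ), θ₁(h|τ), θ_i(h|τ) ≠ 0, the function f(z) = θ_i(z|τ) solves the difference Lamé equation [θ₁(z−h)/θ₁(z)]·f(z+h) + [θ₁(z+h)/θ₁(z)]·f(z−h) = E_i·f(z) with eigenvalue E_i = θ₁(2h)θ_i(0)/(θ₁(h)θ_i(h)). -/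
open Complex

/-- The Jacobi theta function θ₂(z|τ). -/
noncomputable def th2 (τ z : ℂ) : ℂ :=
  ∑' k : ℤ, exp (2 * (Real.pi : ℂ) * I *
    (z * ((k : ℂ) + 1/2) + ((k : ℂ) + 1/2)^2 * τ / 2))

/-- The Jacobi theta function θ₃(z|τ). -/
noncomputable def th3 (τ z : ℂ) : ℂ :=
  ∑' k : ℤ, exp (2 * (Real.pi : ℂ) * I * (z * (k : ℂ) + (k : ℂ)^2 * τ / 2))

/-- The Jacobi theta function θ₄(z|τ). -/
noncomputable def th4 (τ z : ℂ) : ℂ :=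
  ∑' k : ℤ, exp (2 * (Real.pi : ℂ) * I * ((z + 1/2) * (k : ℂ) + (k : ℂ)^2 * τ / 2))

set_option maxHeartbeats 1000000

noncomputable def ee (w : ℂ) : ℂ := exp (2 * (Real.pi : ℂ) * I * w)

lemma ee_mul (a b : ℂ) : ee a * ee b = ee (a + b) := by
  rw [ee, ee, ee, ← Complex.exp_add]; congr 1; ring

lemma ee_int (w : ℂ) (n : ℤ) : ee (w + n) = ee w := by
  rw [ee, ee, show 2 * (Real.pi : ℂ) * I * (w + n) = 2 * (Real.pi:ℂ) * I * w + n * (2 * (Real.pi:ℂ) * I) by push_cast; ring,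
    Complex.exp_add, Complex.exp_int_mul_two_pi_mul_I, mul_one]

lemma ee_eq {w w' : ℂ} (n : ℤ) (h : w = w' + n) : ee w = ee w' := by
  rw [h, ee_int]

lemma ee_half (w : ℂ) : ee (w + 1/2) = -ee w := by
  rw [← ee_mul, show ee (1/2) = -1 by rw [ee, show 2*(Real.pi:ℂ)*I*(1/2) = Real.pi * I by ring, Complex.exp_pi_mul_I], mul_neg_one]

lemma ee_neg_eq {w w' : ℂ} (n : ℤ) (h : w = w' + n + 1/2) : ee w = -ee w' := by
  rw [h, show w' + n + 1/2 = w' + 1/2 + n by ring, ee_int, ee_half]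

lemma summable_norm_ee (σ : ℂ) (hσ : 0 < σ.im) (a w d c : ℂ) :
    Summable fun k : ℤ => ‖ee (σ * ((k:ℂ) + a)^2 + ((k:ℂ) + a) * w + d * (k:ℂ) + c)‖ := by
  have h2σ : 0 < (2*σ).im := by
    have : (2*σ).im = 2 * σ.im := by simp [Complex.mul_im]
    rw [this]; linarith
  have S : Summable fun n : ℤ => jacobiTheta₂_term n (2*a*σ + w + d) (2*σ) :=
    (summable_jacobiTheta₂_term_iff _ _).2 h2σ
  have S2 : Summable fun n : ℤ => ‖jacobiTheta₂_term n (2*a*σ + w + d) (2*σ)‖ :=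
    summable_norm_iff.2 S
  refine (S2.mul_left ‖ee (σ*a^2 + a*w + c)‖).congr fun k => ?_
  rw [← norm_mul]
  congr 1
  rw [jacobiTheta₂_term, ee, ee, ← Complex.exp_add]
  congr 1
  push_cast
  ring

noncomputable def Th (τ a b z : ℂ) : ℂ :=
  ∑' k : ℤ, ee ((z + b) * ((k:ℂ) + a) + ((k:ℂ) + a)^2 * τ / 2)

noncomputable def Phi (τ a d w : ℂ) : ℂ :=
  ∑' k : ℤ, ee (τ * ((k:ℂ) + a)^2 + ((k:ℂ) + a) * w + d * (k:ℂ) + 1/8)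

lemma summable_norm_Th (τ : ℂ) (hτ : 0 < τ.im) (a b z : ℂ) :
    Summable fun k : ℤ => ‖ee ((z + b) * ((k:ℂ) + a) + ((k:ℂ) + a)^2 * τ / 2)‖ := by
  have h : 0 < (τ/2).im := by
    have : (τ/2).im = τ.im / 2 := by simp [Complex.div_im]
    rw [this]; linarith
  refine (summable_norm_ee (τ/2) h a (z+b) 0 0).congr fun k => ?_
  congr 2
  ring

lemma summable_norm_Phi (τ : ℂ) (hτ : 0 < τ.im) (a d w : ℂ) :
    Summable fun k : ℤ => ‖ee (τ * ((k:ℂ) + a)^2 + ((k:ℂ) + a) * w + d * (k:ℂ) + 1/8)‖ :=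
  summable_norm_ee τ hτ a w d (1/8)

def e1 : Bool × (ℤ × ℤ) ≃ ℤ × ℤ where
  toFun x := if x.1 then (-x.2.1 - x.2.2 - 1, x.2.2 - x.2.1) else (x.2.1 + x.2.2, x.2.1 - x.2.2)
  invFun y := if (y.1 + y.2) % 2 = 0 then (false, ((y.1 + y.2)/2, (y.1 - y.2)/2))
    else (true, ((-y.1 - 1 - y.2)/2, (y.2 - y.1 - 1)/2))
  left_inv := by
    rintro ⟨b, α, β⟩
    cases b <;> simp [Prod.ext_iff] <;> split_ifs with hc <;> simp [Prod.ext_iff] <;> omega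
  right_inv := by
    rintro ⟨k, m⟩
    by_cases hc : (k + m) % 2 = 0 <;> simp [hc, Prod.ext_iff] <;> omega

def e2 : Bool × (ℤ × ℤ) ≃ ℤ × ℤ where
  toFun x := if x.1 then (x.2.1 + x.2.2, x.2.1 - x.2.2) else (x.2.1 + x.2.2, x.2.1 - x.2.2 - 1)
  invFun y := if (y.1 + y.2) % 2 = 0 then (true, ((y.1 + y.2)/2, (y.1 - y.2)/2))
    else (false, ((y.1 + y.2 + 1)/2, (y.1 - y.2 - 1)/2))
  left_inv := by
    rintro ⟨b, α, β⟩
    cases b <;> simp [Prod.ext_iff] <;> split_ifs with hc <;> simp [Prod.ext_iff] <;> omega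
  right_inv := by
    rintro ⟨k, m⟩
    by_cases hc : (k + m) % 2 = 0 <;> simp [hc, Prod.ext_iff] <;> omega

lemma e1_false (α β : ℤ) : e1 (false, (α, β)) = (α + β, α - β) := by simp [e1]
lemma e1_true (α β : ℤ) : e1 (true, (α, β)) = (-α - β - 1, β - α) := by simp [e1]
lemma e2_false (α β : ℤ) : e2 (false, (α, β)) = (α + β, α - β - 1) := by simp [e2]
lemma e2_true (α β : ℤ) : e2 (true, (α, β)) = (α + β, α - β) := by simp [e2]

lemma master {F : ℤ × ℤ → ℂ} {p q r s : ℤ → ℂ} (e : Bool × (ℤ × ℤ) ≃ ℤ × ℤ)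
    (hF : Summable fun x : ℤ × ℤ => ‖F x‖)
    (hp : Summable fun k => ‖p k‖) (hq : Summable fun k => ‖q k‖)
    (hr : Summable fun k => ‖r k‖) (hs : Summable fun k => ‖s k‖)
    (h1 : ∀ α β : ℤ, F (e (false, (α, β))) = p α * q β)
    (h2 : ∀ α β : ℤ, F (e (true, (α, β))) = r α * s β) :
    ∑' x, F x = (∑' k, p k) * (∑' k, q k) + (∑' k, r k) * (∑' k, s k) := by
  have hFe : Summable fun y : Bool × (ℤ × ℤ) => F (e y) := e.summable_iff.2 hF.of_norm
  have hfalse : (∑' c : ℤ × ℤ, F (e (false, c))) = (∑' k, p k) * (∑' k, q k) := by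
    rw [tsum_mul_tsum_of_summable_norm hp hq]
    exact tsum_congr fun c => by simpa using h1 c.1 c.2
  have htrue : (∑' c : ℤ × ℤ, F (e (true, c))) = (∑' k, r k) * (∑' k, s k) := by
    rw [tsum_mul_tsum_of_summable_norm hr hs]
    exact tsum_congr fun c => by simpa using h2 c.1 c.2
  calc ∑' x, F x = ∑' y : Bool × (ℤ × ℤ), F (e y) := (e.tsum_eq F).symm
    _ = ∑' (b : Bool), ∑' (c : ℤ × ℤ), F (e (b, c)) := by
        refine Summable.tsum_prod' hFe fun b => ?_
        cases b
        · exact Summable.congr (summable_mul_of_summable_norm hp hq)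
            fun c => by simpa using (h1 c.1 c.2).symm
        · exact Summable.congr (summable_mul_of_summable_norm hr hs)
            fun c => by simpa using (h2 c.1 c.2).symm
    _ = (∑' c : ℤ × ℤ, F (e (false, c))) + ∑' c : ℤ × ℤ, F (e (true, c)) := tsum_bool _
    _ = (∑' k, p k) * (∑' k, q k) + (∑' k, r k) * (∑' k, s k) := by rw [hfalse, htrue]

lemma master2 (f g p q r s : ℤ → ℂ) (e : Bool × (ℤ × ℤ) ≃ ℤ × ℤ)
    (hf : Summable fun k => ‖f k‖) (hg : Summable fun k => ‖g k‖)
    (hp : Summable fun k => ‖p k‖) (hq : Summable fun k => ‖q k‖)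
    (hr : Summable fun k => ‖r k‖) (hs : Summable fun k => ‖s k‖)
    (h1 : ∀ α β : ℤ, f (e (false, (α, β))).1 * g (e (false, (α, β))).2 = p α * q β)
    (h2 : ∀ α β : ℤ, f (e (true, (α, β))).1 * g (e (true, (α, β))).2 = r α * s β) :
    (∑' k, f k) * (∑' k, g k) = (∑' k, p k) * (∑' k, q k) + (∑' k, r k) * (∑' k, s k) := by
  rw [tsum_mul_tsum_of_summable_norm hf hg]
  exact master e (hf.mul_norm hg) hp hq hr hs h1 h2

lemma prod3 (τ : ℂ) (hτ : 0 < τ.im) (x y : ℂ) :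
    Th τ (1/2) (1/2) x * Th τ 0 0 y
      = Phi τ (1/4) (1/2) (x+y) * Phi τ (1/4) (1/2) (x-y)
        - Phi τ (1/4) (1/2) (-(x+y)) * Phi τ (1/4) (1/2) (y-x) := by
  have main := master2
    (f := fun k : ℤ => ee ((x + 1/2) * ((k:ℂ) + 1/2) + ((k:ℂ) + 1/2)^2 * τ / 2))
    (g := fun k : ℤ => ee ((y + 0) * ((k:ℂ) + 0) + ((k:ℂ) + 0)^2 * τ / 2))
    (p := fun k : ℤ => ee (τ * ((k:ℂ) + 1/4)^2 + ((k:ℂ) + 1/4) * (x+y) + 1/2 * (k:ℂ) + 1/8))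
    (q := fun k : ℤ => ee (τ * ((k:ℂ) + 1/4)^2 + ((k:ℂ) + 1/4) * (x-y) + 1/2 * (k:ℂ) + 1/8))
    (r := fun k : ℤ => ee (τ * ((k:ℂ) + 1/4)^2 + ((k:ℂ) + 1/4) * (-(x+y)) + 1/2 * (k:ℂ) + 1/8))
    (s := fun k : ℤ => -ee (τ * ((k:ℂ) + 1/4)^2 + ((k:ℂ) + 1/4) * (y-x) + 1/2 * (k:ℂ) + 1/8))
    e1
    (summable_norm_Th τ hτ (1/2) (1/2) x)
    (summable_norm_Th τ hτ 0 0 y)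
    (summable_norm_Phi τ hτ (1/4) (1/2) (x+y))
    (summable_norm_Phi τ hτ (1/4) (1/2) (x-y))
    (summable_norm_Phi τ hτ (1/4) (1/2) (-(x+y)))
    ((summable_norm_Phi τ hτ (1/4) (1/2) (y-x)).congr fun k => (norm_neg _).symm)
    (fun α β => by
      rw [e1_false]
      show ee _ * ee _ = ee _ * ee _
      rw [ee_mul, ee_mul]
      exact ee_eq 0 (by push_cast; ring))
    (fun α β => by
      rw [e1_true]
      show ee _ * ee _ = _ * -ee _
      rw [ee_mul, mul_neg, ee_mul]
      exact ee_neg_eq (-α-β-1) (by push_cast; ring))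
  calc Th τ (1/2) (1/2) x * Th τ 0 0 y
      = (∑' k : ℤ, ee ((x + 1/2) * ((k:ℂ) + 1/2) + ((k:ℂ) + 1/2)^2 * τ / 2)) *
        (∑' k : ℤ, ee ((y + 0) * ((k:ℂ) + 0) + ((k:ℂ) + 0)^2 * τ / 2)) := rfl
    _ = _ := main.trans (by rw [tsum_neg]; unfold Phi; ring)

lemma prod4 (τ : ℂ) (hτ : 0 < τ.im) (x y : ℂ) :
    Th τ (1/2) (1/2) x * Th τ 0 (1/2) y
      = Phi τ (1/4) 0 (x+y) * Phi τ (1/4) 0 (x-y)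
        - Phi τ (1/4) 0 (-(x+y)) * Phi τ (1/4) 0 (y-x) := by
  have main := master2
    (f := fun k : ℤ => ee ((x + 1/2) * ((k:ℂ) + 1/2) + ((k:ℂ) + 1/2)^2 * τ / 2))
    (g := fun k : ℤ => ee ((y + 1/2) * ((k:ℂ) + 0) + ((k:ℂ) + 0)^2 * τ / 2))
    (p := fun k : ℤ => ee (τ * ((k:ℂ) + 1/4)^2 + ((k:ℂ) + 1/4) * (x+y) + 0 * (k:ℂ) + 1/8))
    (q := fun k : ℤ => ee (τ * ((k:ℂ) + 1/4)^2 + ((k:ℂ) + 1/4) * (x-y) + 0 * (k:ℂ) + 1/8))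
    (r := fun k : ℤ => ee (τ * ((k:ℂ) + 1/4)^2 + ((k:ℂ) + 1/4) * (-(x+y)) + 0 * (k:ℂ) + 1/8))
    (s := fun k : ℤ => -ee (τ * ((k:ℂ) + 1/4)^2 + ((k:ℂ) + 1/4) * (y-x) + 0 * (k:ℂ) + 1/8))
    e1
    (summable_norm_Th τ hτ (1/2) (1/2) x)
    (summable_norm_Th τ hτ 0 (1/2) y)
    (summable_norm_Phi τ hτ (1/4) 0 (x+y))
    (summable_norm_Phi τ hτ (1/4) 0 (x-y))
    (summable_norm_Phi τ hτ (1/4) 0 (-(x+y)))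
    ((summable_norm_Phi τ hτ (1/4) 0 (y-x)).congr fun k => (norm_neg _).symm)
    (fun α β => by
      rw [e1_false]
      show ee _ * ee _ = ee _ * ee _
      rw [ee_mul, ee_mul]
      exact ee_eq α (by push_cast; ring))
    (fun α β => by
      rw [e1_true]
      show ee _ * ee _ = _ * -ee _
      rw [ee_mul, mul_neg, ee_mul]
      exact ee_neg_eq (-α-1) (by push_cast; ring))
  calc Th τ (1/2) (1/2) x * Th τ 0 (1/2) y
      = (∑' k : ℤ, ee ((x + 1/2) * ((k:ℂ) + 1/2) + ((k:ℂ) + 1/2)^2 * τ / 2)) *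
        (∑' k : ℤ, ee ((y + 1/2) * ((k:ℂ) + 0) + ((k:ℂ) + 0)^2 * τ / 2)) := rfl
    _ = _ := main.trans (by rw [tsum_neg]; unfold Phi; ring)

lemma prod2 (τ : ℂ) (hτ : 0 < τ.im) (x y : ℂ) :
    Th τ (1/2) (1/2) x * Th τ (1/2) 0 y
      = Phi τ 0 (1/2) (x+y) * Phi τ (1/2) (1/2) (x-y)
        + Phi τ (1/2) (1/2) (x+y) * Phi τ 0 (1/2) (x-y) := by
  have main := master2
    (f := fun k : ℤ => ee ((x + 1/2) * ((k:ℂ) + 1/2) + ((k:ℂ) + 1/2)^2 * τ / 2))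
    (g := fun k : ℤ => ee ((y + 0) * ((k:ℂ) + 1/2) + ((k:ℂ) + 1/2)^2 * τ / 2))
    (p := fun k : ℤ => ee (τ * ((k:ℂ) + 0)^2 + ((k:ℂ) + 0) * (x+y) + 1/2 * (k:ℂ) + 1/8))
    (q := fun k : ℤ => ee (τ * ((k:ℂ) + 1/2)^2 + ((k:ℂ) + 1/2) * (x-y) + 1/2 * (k:ℂ) + 1/8))
    (r := fun k : ℤ => ee (τ * ((k:ℂ) + 1/2)^2 + ((k:ℂ) + 1/2) * (x+y) + 1/2 * (k:ℂ) + 1/8))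
    (s := fun k : ℤ => ee (τ * ((k:ℂ) + 0)^2 + ((k:ℂ) + 0) * (x-y) + 1/2 * (k:ℂ) + 1/8))
    e2
    (summable_norm_Th τ hτ (1/2) (1/2) x)
    (summable_norm_Th τ hτ (1/2) 0 y)
    (summable_norm_Phi τ hτ 0 (1/2) (x+y))
    (summable_norm_Phi τ hτ (1/2) (1/2) (x-y))
    (summable_norm_Phi τ hτ (1/2) (1/2) (x+y))
    (summable_norm_Phi τ hτ 0 (1/2) (x-y))
    (fun α β => by
      rw [e2_false]
      show ee _ * ee _ = ee _ * ee _
      rw [ee_mul, ee_mul]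
      exact ee_eq 0 (by push_cast; ring))
    (fun α β => by
      rw [e2_true]
      show ee _ * ee _ = ee _ * ee _
      rw [ee_mul, ee_mul]
      exact ee_eq 0 (by push_cast; ring))
  calc Th τ (1/2) (1/2) x * Th τ (1/2) 0 y
      = (∑' k : ℤ, ee ((x + 1/2) * ((k:ℂ) + 1/2) + ((k:ℂ) + 1/2)^2 * τ / 2)) *
        (∑' k : ℤ, ee ((y + 0) * ((k:ℂ) + 1/2) + ((k:ℂ) + 1/2)^2 * τ / 2)) := rfl
    _ = _ := main.trans (by unfold Phi; ring)

lemma A_even (τ w : ℂ) : Phi τ 0 (1/2) (-w) = Phi τ 0 (1/2) w := by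
  have h := (Equiv.neg ℤ).tsum_eq
    (fun k : ℤ => ee (τ * ((k:ℂ) + 0)^2 + ((k:ℂ) + 0) * w + 1/2 * (k:ℂ) + 1/8))
  calc Phi τ 0 (1/2) (-w)
      = ∑' k : ℤ, (fun k : ℤ => ee (τ * ((k:ℂ) + 0)^2 + ((k:ℂ) + 0) * w + 1/2 * (k:ℂ) + 1/8))
          ((Equiv.neg ℤ) k) := by
        refine tsum_congr fun k => ?_
        simp only [Equiv.neg_apply]
        show ee _ = ee _
        exact ee_eq k (by push_cast; ring)
    _ = Phi τ 0 (1/2) w := h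

lemma B_odd (τ w : ℂ) : Phi τ (1/2) (1/2) (-w) = -Phi τ (1/2) (1/2) w := by
  have h := (Equiv.subLeft (-1 : ℤ)).tsum_eq
    (fun k : ℤ => ee (τ * ((k:ℂ) + 1/2)^2 + ((k:ℂ) + 1/2) * w + 1/2 * (k:ℂ) + 1/8))
  calc Phi τ (1/2) (1/2) (-w)
      = ∑' k : ℤ, -((fun k : ℤ => ee (τ * ((k:ℂ) + 1/2)^2 + ((k:ℂ) + 1/2) * w + 1/2 * (k:ℂ) + 1/8))
          ((Equiv.subLeft (-1 : ℤ)) k)) := by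
        refine tsum_congr fun k => ?_
        simp only [Equiv.subLeft_apply]
        show ee _ = -ee _
        exact ee_neg_eq k (by push_cast; ring)
    _ = -∑' k : ℤ, (fun k : ℤ => ee (τ * ((k:ℂ) + 1/2)^2 + ((k:ℂ) + 1/2) * w + 1/2 * (k:ℂ) + 1/8))
          ((Equiv.subLeft (-1 : ℤ)) k) := tsum_neg
    _ = -Phi τ (1/2) (1/2) w := by rw [h]; rfl

lemma key1 {T G P : ℂ → ℂ}
    (H : ∀ x y : ℂ, T x * G y = P (x+y) * P (x-y) - P (-(x+y)) * P (y-x)) (z h : ℂ) :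
    T h * G h * (T (z-h) * G (z+h) + T (z+h) * G (z-h)) = T (2*h) * G 0 * T z * G z := by
  have A1 := H h h
  rw [show h + h = 2*h by ring, show h - h = (0:ℂ) by ring] at A1
  have A2 := H (z-h) (z+h)
  rw [show z-h + (z+h) = 2*z by ring, show z-h - (z+h) = -(2*h) by ring,
    show z+h - (z-h) = 2*h by ring] at A2
  have A3 := H (z+h) (z-h)
  rw [show z+h + (z-h) = 2*z by ring, show z+h - (z-h) = 2*h by ring,
    show z-h - (z+h) = -(2*h) by ring] at A3
  have A4 := H (2*h) 0
  rw [add_zero, sub_zero, zero_sub] at A4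
  have A5 := H z z
  rw [show z + z = 2*z by ring, show z - z = (0:ℂ) by ring] at A5
  rw [mul_assoc (T (2*h) * G 0), A1, A2, A3, A4, A5]
  ring

lemma key2 {T G A B : ℂ → ℂ}
    (H : ∀ x y : ℂ, T x * G y = A (x+y) * B (x-y) + B (x+y) * A (x-y))
    (hA : ∀ w, A (-w) = A w) (hB : ∀ w, B (-w) = -B w) (z h : ℂ) :
    T h * G h * (T (z-h) * G (z+h) + T (z+h) * G (z-h)) = T (2*h) * G 0 * T z * G z := by
  have hB0 : B 0 = 0 := by
    have := hB 0
    rw [neg_zero] at this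
    linear_combination (1/2 : ℂ) * this
  have A1 := H h h
  rw [show h + h = 2*h by ring, show h - h = (0:ℂ) by ring, hB0] at A1
  have A2 := H (z-h) (z+h)
  rw [show z-h + (z+h) = 2*z by ring, show z-h - (z+h) = -(2*h) by ring, hA, hB] at A2
  have A3 := H (z+h) (z-h)
  rw [show z+h + (z-h) = 2*z by ring, show z+h - (z-h) = 2*h by ring] at A3
  have A4 := H (2*h) 0
  rw [add_zero, sub_zero] at A4
  have A5 := H z z
  rw [show z + z = 2*z by ring, show z - z = (0:ℂ) by ring, hB0] at A5
  rw [mul_assoc (T (2*h) * G 0), A1, A2, A3, A4, A5]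
  ring

lemma second {T G : ℂ → ℂ} {z h : ℂ}
    (main : T h * G h * (T (z-h) * G (z+h) + T (z+h) * G (z-h)) = T (2*h) * G 0 * T z * G z)
    (hz : T z ≠ 0) (hh : T h ≠ 0) (hG : G h ≠ 0) :
    T (z-h) / T z * G (z+h) + T (z+h) / T z * G (z-h)
      = T (2*h) * G 0 / (T h * G h) * G z := by
  field_simp
  rw [show h * 2 = 2 * h by ring]
  linear_combination main

lemma th1_eq (τ : ℂ) : th1 τ = Th τ (1/2) (1/2) := by
  funext z; exact tsum_congr fun k => rfl

lemma th2_eq (τ : ℂ) : th2 τ = Th τ (1/2) 0 := by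
  funext z; refine tsum_congr fun k => ?_; show ee _ = ee _; exact ee_eq 0 (by push_cast; ring)

lemma th3_eq (τ : ℂ) : th3 τ = Th τ 0 0 := by
  funext z; refine tsum_congr fun k => ?_; show ee _ = ee _; exact ee_eq 0 (by push_cast; ring)

lemma th4_eq (τ : ℂ) : th4 τ = Th τ 0 (1/2) := by
  funext z; refine tsum_congr fun k => ?_; show ee _ = ee _; exact ee_eq 0 (by push_cast; ring)

/-- Lemma 6 ("a1eigen"): for `i = 2, 3, 4` the theta function `θᵢ` solves the
difference Lamé (two-body Ruijsenaars) equation with coupling `ℓ = 1`, with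
eigenvalue `Eᵢ = θ₁(2h)θᵢ(0)/(θ₁(h)θᵢ(h))`; equivalently the corresponding
entire-function identity holds. -/
theorem stmt_3 (τ : ℂ) (hτ : 0 < τ.im) (F : ℂ → ℂ)
    (hF : F = th2 τ ∨ F = th3 τ ∨ F = th4 τ) (z h : ℂ) :
    th1 τ h * F h * (th1 τ (z - h) * F (z + h) + th1 τ (z + h) * F (z - h))
      = th1 τ (2 * h) * F 0 * th1 τ z * F z ∧
    (th1 τ z ≠ 0 → th1 τ h ≠ 0 → F h ≠ 0 →
      th1 τ (z - h) / th1 τ z * F (z + h) + th1 τ (z + h) / th1 τ z * F (z - h)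
        = th1 τ (2 * h) * F 0 / (th1 τ h * F h) * F z) := by
  rcases hF with rfl | rfl | rfl
  · have main : th1 τ h * th2 τ h * (th1 τ (z - h) * th2 τ (z + h) + th1 τ (z + h) * th2 τ (z - h))
        = th1 τ (2 * h) * th2 τ 0 * th1 τ z * th2 τ z := by
      rw [th1_eq, th2_eq]
      exact key2 (fun x y => prod2 τ hτ x y) (A_even τ) (B_odd τ) z h
    exact ⟨main, fun hz hh hG => second main hz hh hG⟩
  · have main : th1 τ h * th3 τ h * (th1 τ (z - h) * th3 τ (z + h) + th1 τ (z + h) * th3 τ (z - h))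
        = th1 τ (2 * h) * th3 τ 0 * th1 τ z * th3 τ z := by
      rw [th1_eq, th3_eq]
      exact key1 (fun x y => prod3 τ hτ x y) z h
    exact ⟨main, fun hz hh hG => second main hz hh hG⟩
  · have main : th1 τ h * th4 τ h * (th1 τ (z - h) * th4 τ (z + h) + th1 τ (z + h) * th4 τ (z - h))
        = th1 τ (2 * h) * th4 τ 0 * th1 τ z * th4 τ z := by
      rw [th1_eq, th4_eq]
      exact key1 (fun x y => prod4 τ hτ x y) z h
    exact ⟨main, fun hz hh hG => second main hz hh hG⟩
end

section
/- Define f₁ = Θ_{(1,0)} + Θ_{(0,1)}, f₂ = Θ_{(0,0)} + Θ_{(1,1)}, f₃ = Θ_{(0,0)} − Θ_{(1,1)}, and for i = 1,2,3 set E_i = (θ₁(2h|τ)·θ_{i+1}(0|τ) / (θ₁(h|τ)·θ_{i+1}(h|τ)))². Then for each i ∈ {1,2,3}: (M̃₁ f_i)(λ₁,λ₂) = E_i · f_i(λ₁,λ₂) and (M̃₂ f_i)(λ₁,λ₂) = 2E_i · f_i(λ₁,λ₂), for all h ∈ ℂ with θ₁(h|τ)·θ_{i+1}(h|τ) ≠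 0 and all (λ₁,λ₂) ∈ ℂ² at which every theta-function denominator occurring in M̃₁ and M̃₂ is nonzero. -/
open Complex

/-- The classical theta function `Θ_{(a₁,a₂)}` of level one for `C₂`. -/
noncomputable def ThC2 (τ : ℂ) (a₁ a₂ : ℤ) (l : ℂ × ℂ) : ℂ :=
  ∑' mn : ℤ × ℤ, exp (2 * (Real.pi : ℂ) * I *
    (((2 * mn.1 + a₁ : ℤ) : ℂ) * l.1 + ((2 * mn.2 + a₂ : ℤ) : ℂ) * l.2 +
      (((2 * mn.1 + a₁ : ℤ) : ℂ)^2 + ((2 * mn.2 + a₂ : ℤ) : ℂ)^2) * τ / 4))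

/-- The common eigenfunctions `f₁, f₂, f₃ ∈ Th₁^W`. -/
noncomputable def eigf (τ : ℂ) : Fin 3 → ℂ × ℂ → ℂ :=
  ![fun l => ThC2 τ 1 0 l + ThC2 τ 0 1 l,
    fun l => ThC2 τ 0 0 l + ThC2 τ 1 1 l,
    fun l => ThC2 τ 0 0 l - ThC2 τ 1 1 l]

/-- The theta function `θ_{i+1}` attached to the eigenfunction `f_i`. -/
noncomputable def thNext (τ : ℂ) : Fin 3 → ℂ → ℂ := ![th2 τ, th3 τ, th4 τ]

/-! ### Auxiliary theta machinery -/

/-- General theta term with characteristic `c`. -/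
noncomputable def Jt (σ c z : ℂ) (k : ℤ) : ℂ :=
  exp (2 * (Real.pi : ℂ) * I * (((k : ℂ) + c) * z + ((k : ℂ) + c)^2 * σ / 2))

/-- General theta series with characteristic `c`. -/
noncomputable def J (σ c z : ℂ) : ℂ := ∑' k : ℤ, Jt σ c z k

lemma Jt_eq (σ c z : ℂ) (k : ℤ) :
    Jt σ c z k = exp (2 * (Real.pi:ℂ) * I * (c * z + c^2 * σ / 2)) *
      jacobiTheta₂_term k (z + c * σ) σ := by
  rw [Jt, jacobiTheta₂_term, ← Complex.exp_add]; congr 1; ring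

lemma Jsummable {σ : ℂ} (hσ : 0 < σ.im) (c z : ℂ) : Summable (Jt σ c z) := by
  have h := (summable_jacobiTheta₂_term_iff (z + c * σ) σ).mpr hσ
  exact (h.mul_left (exp (2 * (Real.pi:ℂ) * I * (c * z + c^2*σ/2)))).congr
    fun k => (Jt_eq σ c z k).symm

lemma Jmul {σ : ℂ} (hσ : 0 < σ.im) (c₁ z₁ c₂ z₂ : ℂ) :
    J σ c₁ z₁ * J σ c₂ z₂ = ∑' p : ℤ × ℤ, Jt σ c₁ z₁ p.1 * Jt σ c₂ z₂ p.2 :=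
  tsum_mul_tsum_of_summable_norm
    (summable_norm_iff.mpr (Jsummable hσ c₁ z₁))
    (summable_norm_iff.mpr (Jsummable hσ c₂ z₂))

def eEven : ℤ × ℤ ≃ {p : ℤ × ℤ | Even (p.1 + p.2)} where
  toFun ab := ⟨(ab.1 + ab.2, ab.1 - ab.2), by
    simp only [Set.mem_setOf_eq, Int.even_iff]; omega⟩
  invFun p := ((p.1.1 + p.1.2) / 2, (p.1.1 - p.1.2) / 2)
  left_inv ab := by
    obtain ⟨a, b⟩ := ab
    refine Prod.ext ?_ ?_ <;> simp only [] <;> omega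
  right_inv p := by
    obtain ⟨⟨k, l⟩, hp⟩ := p
    rw [Set.mem_setOf_eq, Int.even_iff] at hp
    ext <;> simp only [] <;> omega

def eOdd : ℤ × ℤ ≃ ↥({p : ℤ × ℤ | Even (p.1 + p.2)}ᶜ) where
  toFun ab := ⟨(ab.1 + ab.2 + 1, ab.1 - ab.2), by
    simp only [Set.mem_compl_iff, Set.mem_setOf_eq, Int.even_iff]; omega⟩
  invFun p := ((p.1.1 + p.1.2 - 1) / 2, (p.1.1 - p.1.2 - 1) / 2)
  left_inv ab := by
    obtain ⟨a, b⟩ := ab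
    refine Prod.ext ?_ ?_ <;> simp only [] <;> omega
  right_inv p := by
    obtain ⟨⟨k, l⟩, hp⟩ := p
    rw [Set.mem_compl_iff, Set.mem_setOf_eq, Int.even_iff] at hp
    ext <;> simp only [] <;> omega

lemma him2 {σ : ℂ} (hσ : 0 < σ.im) : 0 < (2*σ).im := by
  rw [show (2:ℂ)*σ = σ + σ by ring, Complex.add_im]; linarith

/-- The master dissection identity for products of theta series. -/
lemma J5 {σ : ℂ} (hσ : 0 < σ.im) (c₁ c₂ u v : ℂ) :
    J σ c₁ u * J σ c₂ v
    = J (2*σ) ((c₁+c₂)/2) (u+v) * J (2*σ) ((c₁-c₂)/2) (u-v)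
    + J (2*σ) ((c₁+c₂+1)/2) (u+v) * J (2*σ) ((c₁-c₂+1)/2) (u-v) := by
  have hσ2 := him2 hσ
  rw [Jmul hσ, Jmul hσ2, Jmul hσ2]
  have hFs : Summable (fun p : ℤ × ℤ => Jt σ c₁ u p.1 * Jt σ c₂ v p.2) :=
    summable_mul_of_summable_norm
      (summable_norm_iff.mpr (Jsummable hσ c₁ u))
      (summable_norm_iff.mpr (Jsummable hσ c₂ v))
  rw [← Summable.tsum_add_tsum_compl (s := {p : ℤ × ℤ | Even (p.1 + p.2)})
    (hFs.subtype _) (hFs.subtype _)]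
  congr 1
  · rw [← Equiv.tsum_eq eEven
      (fun x : {p : ℤ × ℤ | Even (p.1 + p.2)} =>
        Jt σ c₁ u (x : ℤ × ℤ).1 * Jt σ c₂ v (x : ℤ × ℤ).2)]
    apply tsum_congr
    rintro ⟨a, b⟩
    show Jt σ c₁ u (a + b) * Jt σ c₂ v (a - b) = _ * _
    rw [Jt, Jt, Jt, Jt, ← Complex.exp_add, ← Complex.exp_add]
    congr 1
    push_cast
    ring
  · rw [← Equiv.tsum_eq eOdd
      (fun x : ↥({p : ℤ × ℤ | Even (p.1 + p.2)}ᶜ) =>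
        Jt σ c₁ u (x : ℤ × ℤ).1 * Jt σ c₂ v (x : ℤ × ℤ).2)]
    apply tsum_congr
    rintro ⟨a, b⟩
    show Jt σ c₁ u (a + b + 1) * Jt σ c₂ v (a - b) = _ * _
    rw [Jt, Jt, Jt, Jt, ← Complex.exp_add, ← Complex.exp_add]
    congr 1
    push_cast
    ring

lemma Jadd1 (σ c z : ℂ) : J σ (c+1) z = J σ c z := by
  rw [J, J, ← Equiv.tsum_eq (Equiv.addRight (1:ℤ)) (Jt σ c z)]
  apply tsum_congr; intro k
  show Jt σ (c+1) z k = Jt σ c z (k+1)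
  rw [Jt, Jt]; congr 1; push_cast; ring

lemma Jneg (σ c z : ℂ) : J σ c (-z) = J σ (-c) z := by
  rw [J, J, ← Equiv.tsum_eq (Equiv.neg ℤ) (Jt σ (-c) z)]
  apply tsum_congr; intro k
  show Jt σ c (-z) k = Jt σ (-c) z (-k)
  rw [Jt, Jt]; congr 1; push_cast; ring

lemma JzShift (σ c z : ℂ) : J σ c (z+1) = exp (2 * (Real.pi:ℂ) * I * c) * J σ c z := by
  rw [J, J, ← tsum_mul_left]
  apply tsum_congr; intro k
  rw [Jt, Jt, ← Complex.exp_add]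
  rw [show 2*(Real.pi:ℂ)*I*c + 2*(Real.pi:ℂ)*I*(((k:ℂ)+c)*z + ((k:ℂ)+c)^2*σ/2)
      = 2*(Real.pi:ℂ)*I*(((k:ℂ)+c)*(z+1) + ((k:ℂ)+c)^2*σ/2) - (k:ℂ)*(2*(Real.pi:ℂ)*I) by
        ring]
  rw [Complex.exp_sub, Complex.exp_int_mul_two_pi_mul_I, div_one]

lemma chalf : exp (2 * (Real.pi:ℂ) * I * (1/2)) = -1 := by
  rw [show 2*(Real.pi:ℂ)*I*(1/2) = (Real.pi:ℂ)*I by ring, Complex.exp_pi_mul_I]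

lemma cquarter : exp (2 * (Real.pi:ℂ) * I * (1/4)) = I := by
  rw [show 2*(Real.pi:ℂ)*I*(1/4) = ((Real.pi:ℂ)/2)*I by ring, Complex.exp_mul_I,
    Complex.cos_pi_div_two, Complex.sin_pi_div_two]
  ring

lemma c3quarter : exp (2 * (Real.pi:ℂ) * I * (3/4)) = -I := by
  rw [show 2*(Real.pi:ℂ)*I*(3/4) = (Real.pi:ℂ)*I + ((Real.pi:ℂ)/2)*I by ring,
    Complex.exp_add, Complex.exp_pi_mul_I, Complex.exp_mul_I,
    Complex.cos_pi_div_two, Complex.sin_pi_div_two]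
  ring

lemma Jone (σ z : ℂ) : J σ 1 z = J σ 0 z := by
  rw [show (1:ℂ) = 0 + 1 by norm_num, Jadd1]

lemma Jrefl0 (σ w : ℂ) : J σ 0 (-w + 1/2) = J σ 0 (w + 1/2) := by
  rw [show -w + 1/2 = -(w - 1/2) by ring, Jneg, neg_zero,
    show w + 1/2 = (w - 1/2) + 1 by ring, JzShift, mul_zero, Complex.exp_zero, one_mul]

lemma Jrefl_half (σ w : ℂ) : J σ (1/2) (-w + 1/2) = - J σ (1/2) (w + 1/2) := by
  rw [show -w + 1/2 = -(w - 1/2) by ring, Jneg,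
    show (-(1/2) : ℂ) = -(1/2) by norm_num,
    show J σ (-(1/2)) (w - 1/2) = J σ (-(1/2) + 1) (w - 1/2) from (Jadd1 σ (-(1/2)) (w - 1/2)).symm,
    show (-(1/2) : ℂ) + 1 = 1/2 by norm_num,
    show w + 1/2 = (w - 1/2) + 1 by ring, JzShift, chalf]
  ring

lemma Jrefl_q (σ w : ℂ) : J σ (1/4) (-w + 1/2) = I * J σ (3/4) (w + 1/2) := by
  rw [show -w + 1/2 = -(w - 1/2) by ring, Jneg,
    show J σ (-(1/4)) (w - 1/2) = J σ (-(1/4) + 1) (w - 1/2) from (Jadd1 σ (-(1/4)) (w - 1/2)).symm,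
    show (-(1/4) : ℂ) + 1 = 3/4 by norm_num,
    show w + 1/2 = (w - 1/2) + 1 by ring, JzShift, c3quarter]
  linear_combination (J σ (3/4) (w - 1/2)) * Complex.I_sq

lemma Jrefl_3q (σ w : ℂ) : J σ (3/4) (-w + 1/2) = -I * J σ (1/4) (w + 1/2) := by
  rw [show -w + 1/2 = -(w - 1/2) by ring, Jneg,
    show J σ (-(3/4)) (w - 1/2) = J σ (-(3/4) + 1) (w - 1/2) from (Jadd1 σ (-(3/4)) (w - 1/2)).symm,
    show (-(3/4) : ℂ) + 1 = 1/4 by norm_num,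
    show w + 1/2 = (w - 1/2) + 1 by ring, JzShift, cquarter]
  linear_combination (J σ (1/4) (w - 1/2)) * Complex.I_sq

lemma Jneg_q (σ w : ℂ) : J σ (1/4) (-w) = J σ (3/4) w := by
  rw [Jneg,
    show J σ (-(1/4)) w = J σ (-(1/4) + 1) w from (Jadd1 σ (-(1/4)) w).symm,
    show (-(1/4) : ℂ) + 1 = 3/4 by norm_num]

lemma Jneg_3q (σ w : ℂ) : J σ (3/4) (-w) = J σ (1/4) w := by
  rw [Jneg,
    show J σ (-(3/4)) w = J σ (-(3/4) + 1) w from (Jadd1 σ (-(3/4)) w).symm,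
    show (-(3/4) : ℂ) + 1 = 1/4 by norm_num]

/-! ### The classical theta functions as `J` series -/

lemma th1J (τ z : ℂ) : th1 τ z = J τ (1/2) (z + 1/2) := by
  rw [th1, J]; apply tsum_congr; intro k; rw [Jt]; congr 1; ring

lemma th2J (τ z : ℂ) : th2 τ z = J τ (1/2) z := by
  rw [th2, J]; apply tsum_congr; intro k; rw [Jt]; congr 1; ring

lemma th3J (τ z : ℂ) : th3 τ z = J τ 0 z := by
  rw [th3, J]; apply tsum_congr; intro k; rw [Jt]; congr 1; ring

lemma th4J (τ z : ℂ) : th4 τ z = J τ 0 (z + 1/2) := by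
  rw [th4, J]; apply tsum_congr; intro k; rw [Jt]; congr 1; ring

lemma th1_zero (τ : ℂ) : th1 τ 0 = 0 := by
  have := th1_odd τ 0
  rw [neg_zero] at this
  linear_combination (1/2 : ℂ) * this

lemma ThC2J {τ : ℂ} (hτ : 0 < τ.im) (a₁ a₂ : ℤ) (l : ℂ × ℂ) :
    ThC2 τ a₁ a₂ l = J (2*τ) ((a₁:ℂ)/2) (2*l.1) * J (2*τ) ((a₂:ℂ)/2) (2*l.2) := by
  rw [ThC2, Jmul (him2 hτ)]
  apply tsum_congr; intro p
  rw [Jt, Jt, ← Complex.exp_add]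
  congr 1
  push_cast
  ring

/-! ### The three addition (dissection) identities -/

lemma hG0 {τ : ℂ} (hτ : 0 < τ.im) (x y : ℂ) :
    th1 τ (x - y) * th2 τ (x + y) + th1 τ (x + y) * th2 τ (x - y)
    = (2 * J (2*τ) (1/2) (2*x + 1/2)) * (J (2*τ) 0 (2*y + 1/2)) := by
  rw [th1J, th1J, th2J, th2J, J5 hτ, J5 hτ]
  rw [show ((1:ℂ)/2 + 1/2)/2 = 1/2 by norm_num,
      show ((1:ℂ)/2 - 1/2)/2 = 0 by norm_num,
      show ((1:ℂ)/2 + 1/2 + 1)/2 = 1 by norm_num,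
      show ((1:ℂ)/2 - 1/2 + 1)/2 = 1/2 by norm_num]
  rw [show (x - y + 1/2) + (x + y) = 2*x + 1/2 by ring,
      show (x - y + 1/2) - (x + y) = -(2*y) + 1/2 by ring,
      show (x + y + 1/2) + (x - y) = 2*x + 1/2 by ring,
      show (x + y + 1/2) - (x - y) = 2*y + 1/2 by ring]
  rw [Jone, Jrefl0, Jrefl_half]
  ring

lemma hG1 {τ : ℂ} (hτ : 0 < τ.im) (x y : ℂ) :
    th1 τ (x - y) * th3 τ (x + y) + th1 τ (x + y) * th3 τ (x - y)
    = (J (2*τ) (1/4) (2*x + 1/2) - I * J (2*τ) (3/4) (2*x + 1/2))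
      * (J (2*τ) (1/4) (2*y + 1/2) + I * J (2*τ) (3/4) (2*y + 1/2)) := by
  rw [th1J, th1J, th3J, th3J, J5 hτ, J5 hτ]
  rw [show ((1:ℂ)/2 + 0)/2 = 1/4 by norm_num,
      show ((1:ℂ)/2 - 0)/2 = 1/4 by norm_num,
      show ((1:ℂ)/2 + 0 + 1)/2 = 3/4 by norm_num,
      show ((1:ℂ)/2 - 0 + 1)/2 = 3/4 by norm_num]
  rw [show (x - y + 1/2) + (x + y) = 2*x + 1/2 by ring,
      show (x - y + 1/2) - (x + y) = -(2*y) + 1/2 by ring,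
      show (x + y + 1/2) + (x - y) = 2*x + 1/2 by ring,
      show (x + y + 1/2) - (x - y) = 2*y + 1/2 by ring]
  rw [Jrefl_q, Jrefl_3q]
  linear_combination (J (2*τ) (3/4) (2*x + 1/2) * J (2*τ) (3/4) (2*y + 1/2)) * Complex.I_sq

lemma hG2 {τ : ℂ} (hτ : 0 < τ.im) (x y : ℂ) :
    th1 τ (x - y) * th4 τ (x + y) + th1 τ (x + y) * th4 τ (x - y)
    = (J (2*τ) (1/4) (2*x + 1) + J (2*τ) (3/4) (2*x + 1))
      * (J (2*τ) (1/4) (2*y) + J (2*τ) (3/4) (2*y)) := by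
  rw [th1J, th1J, th4J, th4J, J5 hτ, J5 hτ]
  rw [show ((1:ℂ)/2 + 0)/2 = 1/4 by norm_num,
      show ((1:ℂ)/2 - 0)/2 = 1/4 by norm_num,
      show ((1:ℂ)/2 + 0 + 1)/2 = 3/4 by norm_num,
      show ((1:ℂ)/2 - 0 + 1)/2 = 3/4 by norm_num]
  rw [show (x - y + 1/2) + (x + y + 1/2) = 2*x + 1 by ring,
      show (x - y + 1/2) - (x + y + 1/2) = -(2*y) by ring,
      show (x + y + 1/2) + (x - y + 1/2) = 2*x + 1 by ring,
      show (x + y + 1/2) - (x - y + 1/2) = 2*y by ring]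
  rw [Jneg_q, Jneg_3q]
  ring

/-! ### Factorization of the eigenfunctions -/

lemma fact0 {τ : ℂ} (hτ : 0 < τ.im) (a b : ℂ) :
    ThC2 τ 1 0 (a, b) + ThC2 τ 0 1 (a, b) = th2 τ (a + b) * th2 τ (a - b) := by
  rw [th2J, th2J, J5 hτ, ThC2J hτ, ThC2J hτ]
  rw [show ((1:ℂ)/2 + 1/2)/2 = 1/2 by norm_num,
      show ((1:ℂ)/2 - 1/2)/2 = 0 by norm_num,
      show ((1:ℂ)/2 + 1/2 + 1)/2 = 1 by norm_num,
      show ((1:ℂ)/2 - 1/2 + 1)/2 = 1/2 by norm_num]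
  rw [show (a + b) + (a - b) = 2*a by ring, show (a + b) - (a - b) = 2*b by ring, Jone]
  push_cast
  norm_num

lemma fact1 {τ : ℂ} (hτ : 0 < τ.im) (a b : ℂ) :
    ThC2 τ 0 0 (a, b) + ThC2 τ 1 1 (a, b) = th3 τ (a + b) * th3 τ (a - b) := by
  rw [th3J, th3J, J5 hτ, ThC2J hτ, ThC2J hτ]
  rw [show ((0:ℂ) + 0)/2 = 0 by norm_num,
      show ((0:ℂ) - 0)/2 = 0 by norm_num,
      show ((0:ℂ) + 0 + 1)/2 = 1/2 by norm_num,
      show ((0:ℂ) - 0 + 1)/2 = 1/2 by norm_num]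
  rw [show (a + b) + (a - b) = 2*a by ring, show (a + b) - (a - b) = 2*b by ring]
  push_cast
  norm_num

lemma fact2 {τ : ℂ} (hτ : 0 < τ.im) (a b : ℂ) :
    ThC2 τ 0 0 (a, b) - ThC2 τ 1 1 (a, b) = th4 τ (a + b) * th4 τ (a - b) := by
  rw [th4J, th4J, J5 hτ, ThC2J hτ, ThC2J hτ]
  rw [show ((0:ℂ) + 0)/2 = 0 by norm_num,
      show ((0:ℂ) - 0)/2 = 0 by norm_num,
      show ((0:ℂ) + 0 + 1)/2 = 1/2 by norm_num,
      show ((0:ℂ) - 0 + 1)/2 = 1/2 by norm_num]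
  rw [show (a + b + 1/2) + (a - b + 1/2) = (2*a) + 1 by ring,
      show (a + b + 1/2) - (a - b + 1/2) = 2*b by ring]
  rw [JzShift, JzShift, chalf, mul_zero, Complex.exp_zero, one_mul]
  push_cast
  norm_num
  ring


/-! ### Algebraic core -/

lemma keyvar (τ h w : ℂ) (g C D : ℂ → ℂ)
    (hG : ∀ x y : ℂ, th1 τ (x - y) * g (x + y) + th1 τ (x + y) * g (x - y) = C x * D y)
    (hDe : D (-h) = D h) (hD0 : D 0 ≠ 0)
    (hT : th1 τ w ≠ 0) (hB : th1 τ (w + h) ≠ 0) (hA : th1 τ (w - h) ≠ 0) :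
    th1 τ (w - h) / th1 τ (w + h) * g (w + 2*h) + th1 τ (w + h) / th1 τ (w - h) * g (w - 2*h)
    + (th1 τ (w - h) * th1 τ (w + 2*h) / (th1 τ w * th1 τ (w + h))
       + th1 τ (w + h) * th1 τ (w - 2*h) / (th1 τ w * th1 τ (w - h))) * g w
    = (2 * D h / D 0)^2 * g w := by
  have i1 := hG (w + h) h
  rw [show w + h - h = w by ring, show w + h + h = w + 2*h by ring] at i1
  have i2 := hG (w - h) (-h)
  rw [show w - h - -h = w by ring, show w - h + -h = w - 2*h by ring, hDe] at i2
  have i3 := hG (w + h) 0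
  rw [sub_zero, add_zero] at i3
  have i4 := hG (w - h) 0
  rw [sub_zero, add_zero] at i4
  have i5 := hG w h
  have i6 := hG w 0
  rw [sub_zero, add_zero] at i6
  field_simp
  rw [show w + h * 2 = w + 2*h by ring, show w - h * 2 = w - 2*h by ring]
  linear_combination
    (1 : ℂ) *
      ((D 0^2 * th1 τ (w-h)^2) * i1 + (D 0^2 * th1 τ (w+h)^2) * i2
       - (D 0 * D h * th1 τ (w-h)^2) * i3 - (D 0 * D h * th1 τ (w+h)^2) * i4
       + (2 * D 0 * D h * th1 τ (w-h) * th1 τ (w+h)) * i5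
       - (2 * D h^2 * th1 τ (w-h) * th1 τ (w+h)) * i6)

lemma generic (τ h : ℂ) (g C D : ℂ → ℂ) (f : ℂ × ℂ → ℂ)
    (hf : ∀ a b : ℂ, f (a, b) = g (a + b) * g (a - b))
    (hG : ∀ x y : ℂ, th1 τ (x - y) * g (x + y) + th1 τ (x + y) * g (x - y) = C x * D y)
    (hh : th1 τ h * g h ≠ 0) (l : ℂ × ℂ)
    (hden : ∀ ε ∈ ({1, -1} : Finset ℤ), ∀ ε' ∈ ({1, -1} : Finset ℤ),
      th1 τ ((ε : ℂ) * l.1 + (ε' : ℂ) * l.2) ≠ 0 ∧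
      th1 τ ((ε : ℂ) * l.1 + (ε' : ℂ) * l.2 + h) ≠ 0) :
    M1t τ h f l = (th1 τ (2 * h) * g 0 / (th1 τ h * g h))^2 * f l ∧
    M2t τ h f l = 2 * (th1 τ (2 * h) * g 0 / (th1 τ h * g h))^2 * f l := by
  obtain ⟨x, y⟩ := l
  have todd : ∀ z, th1 τ (-z) = -th1 τ z := th1_odd τ
  have t0 : th1 τ 0 = 0 := th1_zero τ
  have d11 := hden 1 (by norm_num) 1 (by norm_num)
  have d1m := hden 1 (by norm_num) (-1) (by norm_num)
  have dm1 := hden (-1) (by norm_num) 1 (by norm_num)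
  have dmm := hden (-1) (by norm_num) (-1) (by norm_num)
  push_cast at d11 d1m dm1 dmm
  rw [show (1:ℂ)*x + 1*y = x + y by ring] at d11
  rw [show (1:ℂ)*x + (-1)*y = x - y by ring] at d1m
  rw [show (-1:ℂ)*x + 1*y = -(x - y) by ring] at dm1
  rw [show (-1:ℂ)*x + (-1)*y = -(x + y) by ring] at dmm
  obtain ⟨nP, nPh⟩ := d11
  obtain ⟨nM, nMh⟩ := d1m
  have nPmh : th1 τ (x + y - h) ≠ 0 := by
    have hx := dmm.2
    rw [show -(x+y) + h = -(x + y - h) by ring, todd, neg_ne_zero] at hx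
    exact hx
  have nMmh : th1 τ (x - y - h) ≠ 0 := by
    have hx := dm1.2
    rw [show -(x-y) + h = -(x - y - h) by ring, todd, neg_ne_zero] at hx
    exact hx
  have e1 := hG (x + y) h
  have e2 := hG (x - y) h
  have e3 := hG (x + y) 0
  rw [sub_zero, add_zero] at e3
  have e4 := hG (x - y) 0
  rw [sub_zero, add_zero] at e4
  have e5 := hG h 0
  rw [sub_zero, add_zero] at e5
  have e6 := hG h h
  rw [sub_self, t0, zero_mul, zero_add, show h + h = 2*h by ring] at e6
  have hCD : C h * D 0 ≠ 0 := by
    rw [← e5]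
    intro H
    exact hh (by linear_combination H / 2)
  have hCh : C h ≠ 0 := left_ne_zero_of_mul hCD
  have hD0 : D 0 ≠ 0 := right_ne_zero_of_mul hCD
  have hDe : D (-h) = D h := by
    have hA := hG h (-h)
    rw [show h - -h = h + h by ring, show h + -h = h - h by ring] at hA
    have hB := hG h h
    have : C h * D (-h) = C h * D h := by rw [← hA, ← hB]; ring
    exact mul_left_cancel₀ hCh this
  have hE : th1 τ (2*h) * g 0 / (th1 τ h * g h) = 2 * D h / D 0 := by
    rw [div_eq_div_iff hh hD0]
    linear_combination D 0 * e6 - D h * e5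
  constructor
  · rw [M1t]
    dsimp only
    simp only [hf]
    rw [show x + h + y = x + y + h by ring, show x + h - y = x - y + h by ring,
        show x - h + y = x + y - h by ring, show x - h - y = x - y - h by ring,
        show x + (y + h) = x + y + h by ring, show x - (y + h) = x - y - h by ring,
        show x + (y - h) = x + y - h by ring, show x - (y - h) = x - y + h by ring]
    rw [hE]
    field_simp
    linear_combination
      (D 0^2 * (th1 τ (x-y-h) * g (x-y+h) + th1 τ (x-y+h) * g (x-y-h))) * e1
      + (D 0^2 * (C (x+y) * D h)) * e2
      - (2 * D h^2 * th1 τ (x-y) * g (x-y)) * e3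
      - (D h^2 * C (x+y) * D 0) * e4
  · rw [M2t]
    dsimp only
    simp only [Finset.sum_pair (show (1:ℤ) ≠ -1 by norm_num)]
    push_cast
    simp only [one_mul, neg_one_mul]
    simp only [hf]
    rw [show x + h + (y + h) = x + y + 2*h by ring,
        show x + h - (y + h) = x - y by ring,
        show x + h + (y + -h) = x + y by ring,
        show x + h - (y + -h) = x - y + 2*h by ring,
        show x + -h + (y + h) = x + y by ring,
        show x + -h - (y + h) = x - y - 2*h by ring,
        show x + -h + (y + -h) = x + y - 2*h by ring,
        show x + -h - (y + -h) = x - y by ring]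
    rw [show -x + y - h = -(x - y + h) by ring,
        show -x + y + h = -(x - y - h) by ring,
        show -x + y + 2*h = -(x - y - 2*h) by ring,
        show -x + y = -(x - y) by ring,
        show -x + -y - h = -(x + y + h) by ring,
        show -x + -y + h = -(x + y - h) by ring,
        show -x + -y + 2*h = -(x + y - 2*h) by ring,
        show -x + -y = -(x + y) by ring]
    simp only [todd]
    simp only [neg_mul_neg, neg_div_neg_eq]
    rw [show x + -y - h = x - y - h by ring,
        show x + -y + h = x - y + h by ring,
        show x + -y + 2*h = x - y + 2*h by ring,
        show x + -y = x - y by ring]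
    have kP := keyvar τ h (x + y) g C D hG hDe hD0 nP nPh nPmh
    have kM := keyvar τ h (x - y) g C D hG hDe hD0 nM nMh nMmh
    rw [hE]
    linear_combination g (x - y) * kP + g (x + y) * kM


/-- Theorem 4 ("main"): `f₁, f₂, f₃` are common eigenfunctions of `M̃₁` and `M̃₂`
with eigenvalues `E_i = (θ₁(2h)θ_{i+1}(0)/(θ₁(h)θ_{i+1}(h)))²` and `2E_i`. -/
theorem stmt_5 (τ : ℂ) (hτ : 0 < τ.im) (h : ℂ) (i : Fin 3)
    (hh : th1 τ h * thNext τ i h ≠ 0) (l : ℂ × ℂ)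
    (hden : ∀ ε ∈ ({1, -1} : Finset ℤ), ∀ ε' ∈ ({1, -1} : Finset ℤ),
      th1 τ ((ε : ℂ) * l.1 + (ε' : ℂ) * l.2) ≠ 0 ∧
      th1 τ ((ε : ℂ) * l.1 + (ε' : ℂ) * l.2 + h) ≠ 0) :
    M1t τ h (eigf τ i) l
      = (th1 τ (2 * h) * thNext τ i 0 / (th1 τ h * thNext τ i h))^2 * eigf τ i l ∧
    M2t τ h (eigf τ i) l
      = 2 * (th1 τ (2 * h) * thNext τ i 0 / (th1 τ h * thNext τ i h))^2 * eigf τ i l := by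
  fin_cases i
  · simp only [eigf, thNext, Matrix.cons_val_zero] at hh ⊢
    exact generic τ h (th2 τ)
      (fun x => 2 * J (2*τ) (1/2) (2*x + 1/2)) (fun y => J (2*τ) 0 (2*y + 1/2)) _
      (fun a b => fact0 hτ a b) (fun x y => hG0 hτ x y) hh l hden
  · simp only [eigf, thNext, Matrix.cons_val_one, Matrix.head_cons] at hh ⊢
    exact generic τ h (th3 τ)
      (fun x => J (2*τ) (1/4) (2*x + 1/2) - I * J (2*τ) (3/4) (2*x + 1/2))
      (fun y => J (2*τ) (1/4) (2*y + 1/2) + I * J (2*τ) (3/4) (2*y + 1/2)) _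
      (fun a b => fact1 hτ a b) (fun x y => hG1 hτ x y) hh l hden
  · simp only [eigf, thNext, Matrix.cons_val_two, Matrix.tail_cons, Matrix.head_cons] at hh ⊢
    exact generic τ h (th4 τ)
      (fun x => J (2*τ) (1/4) (2*x + 1) + J (2*τ) (3/4) (2*x + 1))
      (fun y => J (2*τ) (1/4) (2*y) + J (2*τ) (3/4) (2*y)) _
      (fun a b => fact2 hτ a b) (fun x y => hG2 hτ x y) hh l hden
end

section
/- Let ω₁ ∈ ℂ∖{0}, η₁ ∈ ℂ, h ∈ ℂ, and set γ = 2ω₁h. Define v(z) = exp(η₁(−2zγ+γ²)/(2ω₁)) · θ₁((z−γ)/(2ω₁)|τ) / θ₁(z/(2ω₁)|τ) and, for g : ℂ² → ℂ, the van Diejen operator (H̄₁g)(x₁,x₂) = Σ_{ε∈{1,−1}} v(εx₁+x₂)·v(εx₁−x₂)·g(x₁+εγ, x₂) + Σ_{ε∈{1,−1}} v(εx₂+x₁)·v(εx₂−x₁)·g(x₁, x₂+εγ). Then for every g : ℂ² → ℂ, with f(λ₁,λ₂) := exp(−4ω₁η₁(λ₁²+λ₂²)) · g(2ω₁λ₁,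 2ω₁λ₂), and every (x₁,x₂) ∈ ℂ² at which all theta denominators occurring are nonzero: exp(η₁(x₁²+x₂²)/ω₁) · (M̃₁f)(x₁/(2ω₁), x₂/(2ω₁)) = exp(−2η₁γ²/ω₁) · (H̄₁g)(x₁,x₂). In other words, under the gauge transformation φ(f)(x₁,x₂) = exp(η₁(x₁²+x₂²)/ω₁) f(x₁/2ω₁, x₂/2ω₁), the operator M̃₁ is conjugate to the van Diejen operator H̄₁ up to the constant exp(−2η₁γ²/ω₁). -/
set_option maxHeartbeats 1000000


open Complex

/-- The coefficient function `v(z) = σ(z−γ)/σ(z)` of van Diejen's operator,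
expressed through `θ₁`. -/
noncomputable def vD (τ ω₁ η₁ γ z : ℂ) : ℂ :=
  exp (η₁ * (-(2 * z * γ) + γ^2) / (2 * ω₁))
    * th1 τ ((z - γ) / (2 * ω₁)) / th1 τ (z / (2 * ω₁))

/-- Van Diejen's first difference operator `H̄₁` (with the special parameters
`μ = −γ`, `μ_r = μ_r′ = 0`). -/
noncomputable def H1bar (τ ω₁ η₁ γ : ℂ) (g : ℂ × ℂ → ℂ) (x : ℂ × ℂ) : ℂ :=
  (∑ ε ∈ ({1, -1} : Finset ℤ),
    vD τ ω₁ η₁ γ ((ε : ℂ) * x.1 + x.2) * vD τ ω₁ η₁ γ ((ε : ℂ) * x.1 - x.2)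
      * g (x.1 + (ε : ℂ) * γ, x.2))
  + (∑ ε ∈ ({1, -1} : Finset ℤ),
    vD τ ω₁ η₁ γ ((ε : ℂ) * x.2 + x.1) * vD τ ω₁ η₁ γ ((ε : ℂ) * x.2 - x.1)
      * g (x.1, x.2 + (ε : ℂ) * γ))

def negSubEquiv : ℤ ≃ ℤ := ⟨fun k => -k - 1, fun k => -k - 1, fun k => by ring, fun k => by ring⟩

@[simp] lemma negSubEquiv_apply (k : ℤ) : negSubEquiv k = -k - 1 := rfl

/-- Theorem 3 ("connect"), first identity: under the gauge transformation
`φ(f)(x) = exp(η₁(x₁²+x₂²)/ω₁) f(x/2ω₁)`, the operator `M̃₁` is conjugate to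
van Diejen's operator `H̄₁`, up to the constant `exp(−2η₁γ²/ω₁)`. -/
theorem stmt_9 (τ : ℂ) (hτ : 0 < τ.im) (ω₁ : ℂ) (hω₁ : ω₁ ≠ 0) (η₁ h γ : ℂ)
    (hγ : γ = 2 * ω₁ * h) (g : ℂ × ℂ → ℂ) (x : ℂ × ℂ)
    (hden : ∀ ε ∈ ({1, -1} : Finset ℤ), ∀ ε' ∈ ({1, -1} : Finset ℤ),
      th1 τ (((ε : ℂ) * x.1 + (ε' : ℂ) * x.2) / (2 * ω₁)) ≠ 0) :
    exp (η₁ * (x.1^2 + x.2^2) / ω₁)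
        * M1t τ h (fun p => exp (-(4 * ω₁ * η₁ * (p.1^2 + p.2^2)))
            * g (2 * ω₁ * p.1, 2 * ω₁ * p.2)) (x.1 / (2 * ω₁), x.2 / (2 * ω₁))
      = exp (-(2 * η₁ * γ^2 / ω₁)) * H1bar τ ω₁ η₁ γ g x := by
  obtain ⟨a, b⟩ := x
  clear hden
  simp only [M1t, H1bar, vD, Finset.sum_insert (by decide : (1:ℤ) ∉ ({-1} : Finset ℤ)),
    Finset.sum_singleton, Int.cast_one, Int.cast_neg, one_mul, neg_one_mul]
  -- abbreviations
  have two_ne : (2 : ℂ) * ω₁ ≠ 0 := by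
    simp [hω₁]
  -- rewrite theta arguments to canonical form
  have r1 : (a + b - γ) / (2 * ω₁) = a / (2 * ω₁) + b / (2 * ω₁) - h := by
    rw [hγ]; field_simp; try ring
  have r2 : (a + b) / (2 * ω₁) = a / (2 * ω₁) + b / (2 * ω₁) := by
    field_simp
  have r3 : (a - b - γ) / (2 * ω₁) = a / (2 * ω₁) - b / (2 * ω₁) - h := by
    rw [hγ]; field_simp; try ring
  have r4 : (a - b) / (2 * ω₁) = a / (2 * ω₁) - b / (2 * ω₁) := by
    field_simp; try ring
  have r5 : th1 τ ((-a + b - γ) / (2 * ω₁)) = -th1 τ (a / (2 * ω₁) - b / (2 * ω₁) + h) := by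
    rw [show (-a + b - γ) / (2 * ω₁) = -(a / (2 * ω₁) - b / (2 * ω₁) + h) by
      rw [hγ]; field_simp; try ring, th1_odd]
  have r6 : th1 τ ((-a + b) / (2 * ω₁)) = -th1 τ (a / (2 * ω₁) - b / (2 * ω₁)) := by
    rw [show (-a + b) / (2 * ω₁) = -(a / (2 * ω₁) - b / (2 * ω₁)) by field_simp; try ring, th1_odd]
  have r7 : th1 τ ((-a - b - γ) / (2 * ω₁)) = -th1 τ (a / (2 * ω₁) + b / (2 * ω₁) + h) := by
    rw [show (-a - b - γ) / (2 * ω₁) = -(a / (2 * ω₁) + b / (2 * ω₁) + h) by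
      rw [hγ]; field_simp; try ring, th1_odd]
  have r8 : th1 τ ((-a - b) / (2 * ω₁)) = -th1 τ (a / (2 * ω₁) + b / (2 * ω₁)) := by
    rw [show (-a - b) / (2 * ω₁) = -(a / (2 * ω₁) + b / (2 * ω₁)) by field_simp; try ring, th1_odd]
  have r9 : (b + a - γ) / (2 * ω₁) = a / (2 * ω₁) + b / (2 * ω₁) - h := by
    rw [hγ]; field_simp; try ring
  have r10 : (b + a) / (2 * ω₁) = a / (2 * ω₁) + b / (2 * ω₁) := by
    field_simp; try ring
  have r11 : th1 τ ((b - a - γ) / (2 * ω₁)) = -th1 τ (a / (2 * ω₁) - b / (2 * ω₁) + h) := by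
    rw [show (b - a - γ) / (2 * ω₁) = -(a / (2 * ω₁) - b / (2 * ω₁) + h) by
      rw [hγ]; field_simp; try ring, th1_odd]
  have r12 : th1 τ ((b - a) / (2 * ω₁)) = -th1 τ (a / (2 * ω₁) - b / (2 * ω₁)) := by
    rw [show (b - a) / (2 * ω₁) = -(a / (2 * ω₁) - b / (2 * ω₁)) by field_simp; try ring, th1_odd]
  have r13 : (-b + a - γ) / (2 * ω₁) = a / (2 * ω₁) - b / (2 * ω₁) - h := by
    rw [hγ]; field_simp; try ring
  have r14 : (-b + a) / (2 * ω₁) = a / (2 * ω₁) - b / (2 * ω₁) := by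
    field_simp; try ring
  have r15 : th1 τ ((-b - a - γ) / (2 * ω₁)) = -th1 τ (a / (2 * ω₁) + b / (2 * ω₁) + h) := by
    rw [show (-b - a - γ) / (2 * ω₁) = -(a / (2 * ω₁) + b / (2 * ω₁) + h) by
      rw [hγ]; field_simp; try ring, th1_odd]
  have r16 : th1 τ ((-b - a) / (2 * ω₁)) = -th1 τ (a / (2 * ω₁) + b / (2 * ω₁)) := by
    rw [show (-b - a) / (2 * ω₁) = -(a / (2 * ω₁) + b / (2 * ω₁)) by field_simp; try ring, th1_odd]
  -- g arguments on the LHS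
  have g1 : 2 * ω₁ * (a / (2 * ω₁) + h) = a + γ := by rw [hγ]; field_simp; try ring
  have g2 : 2 * ω₁ * (a / (2 * ω₁) - h) = a + -γ := by rw [hγ]; field_simp; try ring
  have g3 : 2 * ω₁ * (a / (2 * ω₁)) = a := by field_simp
  have g4 : 2 * ω₁ * (b / (2 * ω₁) + h) = b + γ := by rw [hγ]; field_simp; try ring
  have g5 : 2 * ω₁ * (b / (2 * ω₁) - h) = b + -γ := by rw [hγ]; field_simp; try ring
  have g6 : 2 * ω₁ * (b / (2 * ω₁)) = b := by field_simp
  rw [r1, r2, r3, r4, r5, r6, r7, r8, r9, r10, r11, r12, r13, r14, r15, r16,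
    g1, g2, g3, g4, g5, g6]
  -- the exponential identities
  have hE1 : exp (η₁ * (a ^ 2 + b ^ 2) / ω₁)
        * exp (-(4 * ω₁ * η₁ * ((a / (2 * ω₁) + h) ^ 2 + (b / (2 * ω₁)) ^ 2)))
      = exp (-(2 * η₁ * γ ^ 2 / ω₁))
        * (exp (η₁ * (-(2 * (a + b) * γ) + γ ^ 2) / (2 * ω₁))
          * exp (η₁ * (-(2 * (a - b) * γ) + γ ^ 2) / (2 * ω₁))) := by
    rw [← exp_add, ← exp_add, ← exp_add]
    congr 1
    rw [hγ]; field_simp; try ring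
  have hE2 : exp (η₁ * (a ^ 2 + b ^ 2) / ω₁)
        * exp (-(4 * ω₁ * η₁ * ((a / (2 * ω₁) - h) ^ 2 + (b / (2 * ω₁)) ^ 2)))
      = exp (-(2 * η₁ * γ ^ 2 / ω₁))
        * (exp (η₁ * (-(2 * (-a + b) * γ) + γ ^ 2) / (2 * ω₁))
          * exp (η₁ * (-(2 * (-a - b) * γ) + γ ^ 2) / (2 * ω₁))) := by
    rw [← exp_add, ← exp_add, ← exp_add]
    congr 1
    rw [hγ]; field_simp; try ring
  have hE3 : exp (η₁ * (a ^ 2 + b ^ 2) / ω₁)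
        * exp (-(4 * ω₁ * η₁ * ((a / (2 * ω₁)) ^ 2 + (b / (2 * ω₁) + h) ^ 2)))
      = exp (-(2 * η₁ * γ ^ 2 / ω₁))
        * (exp (η₁ * (-(2 * (b + a) * γ) + γ ^ 2) / (2 * ω₁))
          * exp (η₁ * (-(2 * (b - a) * γ) + γ ^ 2) / (2 * ω₁))) := by
    rw [← exp_add, ← exp_add, ← exp_add]
    congr 1
    rw [hγ]; field_simp; try ring
  have hE4 : exp (η₁ * (a ^ 2 + b ^ 2) / ω₁)
        * exp (-(4 * ω₁ * η₁ * ((a / (2 * ω₁)) ^ 2 + (b / (2 * ω₁) - h) ^ 2)))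
      = exp (-(2 * η₁ * γ ^ 2 / ω₁))
        * (exp (η₁ * (-(2 * (-b + a) * γ) + γ ^ 2) / (2 * ω₁))
          * exp (η₁ * (-(2 * (-b - a) * γ) + γ ^ 2) / (2 * ω₁))) := by
    rw [← exp_add, ← exp_add, ← exp_add]
    congr 1
    rw [hγ]; field_simp; try ring
  set T1 := th1 τ (a / (2 * ω₁) + b / (2 * ω₁) - h) with hT1
  set T2 := th1 τ (a / (2 * ω₁) - b / (2 * ω₁) - h) with hT2
  set T3 := th1 τ (a / (2 * ω₁) + b / (2 * ω₁)) with hT3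
  set T4 := th1 τ (a / (2 * ω₁) - b / (2 * ω₁)) with hT4
  set T5 := th1 τ (a / (2 * ω₁) + b / (2 * ω₁) + h) with hT5
  set T6 := th1 τ (a / (2 * ω₁) - b / (2 * ω₁) + h) with hT6
  linear_combination
    (T1 * T2 * g (a + γ, b) / (T3 * T4)) * hE1
    + (T5 * T6 * g (a + -γ, b) / (T3 * T4)) * hE2
    + (T1 * T6 * g (a, b + γ) / (T3 * T4)) * hE3
    + (T5 * T2 * g (a, b + -γ) / (T3 * T4)) * hE4
end

section
/- Let ω₁ ∈ ℂ∖{0}, η₁ ∈ ℂ, h ∈ ℂ, and set γ = 2ω₁h. Define v(z) = exp(η₁(−2zγ+γ²)/(2ω₁)) · θ₁((z−γ)/(2ω₁)|τ) / θ₁(z/(2ω₁)|τ) and, for g : ℂ² → ℂ, the operators (H̄₁g)(x₁,x₂) = Σ_{ε∈{1,−1}} v(εx₁+x₂)v(εx₁−x₂) g(x₁+εγ, x₂) + Σ_{ε∈{1,−1}} v(εx₂+x₁)v(εx₂−x₁) g(x₁, x₂+εγ), and (H̄₂g)(x₁,x₂) = Σ_{ε,ε′∈{1,−1}} v(εx₁+ε′x₂)·v(εx₁+ε′x₂+γ)·g(x₁+εγ,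 x₂+ε′γ) − 2·(H̄₁g)(x₁,x₂) + (Σ_{ε,ε′∈{1,−1}} v(εx₁+ε′x₂)·v(−εx₁−ε′x₂−γ))·g(x₁,x₂). Then for every g : ℂ² → ℂ, with f(λ₁,λ₂) := exp(−4ω₁η₁(λ₁²+λ₂²)) · g(2ω₁λ₁, 2ω₁λ₂), and every (x₁,x₂) ∈ ℂ² at which all theta denominators occurring are nonzero: exp(η₁(x₁²+x₂²)/ω₁) · (M̃₂f)(x₁/(2ω₁), x₂/(2ω₁)) = exp(−2η₁γ²/ω₁) · ((H̄₂ + 2H̄₁)g)(x₁,x₂). -/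
open Complex

/-- Van Diejen's second difference operator `H̄₂` (with the special parameters
`μ = −γ`, `μ_r = μ_r′ = 0`). -/
noncomputable def H2bar (τ ω₁ η₁ γ : ℂ) (g : ℂ × ℂ → ℂ) (x : ℂ × ℂ) : ℂ :=
  (∑ ε ∈ ({1, -1} : Finset ℤ), ∑ ε' ∈ ({1, -1} : Finset ℤ),
    vD τ ω₁ η₁ γ ((ε : ℂ) * x.1 + (ε' : ℂ) * x.2)
      * vD τ ω₁ η₁ γ ((ε : ℂ) * x.1 + (ε' : ℂ) * x.2 + γ)
      * g (x.1 + (ε : ℂ) * γ, x.2 + (ε' : ℂ) * γ))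
  - 2 * H1bar τ ω₁ η₁ γ g x
  + (∑ ε ∈ ({1, -1} : Finset ℤ), ∑ ε' ∈ ({1, -1} : Finset ℤ),
      vD τ ω₁ η₁ γ ((ε : ℂ) * x.1 + (ε' : ℂ) * x.2)
        * vD τ ω₁ η₁ γ (-((ε : ℂ) * x.1) - (ε' : ℂ) * x.2 - γ)) * g x

theorem th1_neg (τ z : ℂ) : th1 τ (-z) = -th1 τ z := by
  unfold th1
  rw [← tsum_neg, ← (Equiv.subLeft (-1 : ℤ)).tsum_eq
    (fun k : ℤ => exp (2 * (Real.pi : ℂ) * I *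
      ((-z + 1/2) * ((k : ℂ) + 1/2) + ((k : ℂ) + 1/2)^2 * τ / 2)))]
  refine tsum_congr fun k => ?_
  simp only [Equiv.subLeft_apply]
  have h1 : 2 * (Real.pi : ℂ) * I *
      ((-z + 1/2) * (((-1 - k : ℤ) : ℂ) + 1/2) + (((-1 - k : ℤ) : ℂ) + 1/2)^2 * τ / 2)
      = 2 * (Real.pi : ℂ) * I *
          ((z + 1/2) * ((k : ℂ) + 1/2) + ((k : ℂ) + 1/2)^2 * τ / 2)
        + ((-1 - k : ℤ) : ℂ) * (2 * (Real.pi : ℂ) * I) + (Real.pi : ℂ) * I := by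
    push_cast; ring
  rw [h1, exp_add, exp_add, Complex.exp_int_mul_two_pi_mul_I, Complex.exp_pi_mul_I]
  ring


theorem termA (τ ω₁ η₁ h γ : ℂ) (hω₁ : ω₁ ≠ 0) (hγ : γ = 2 * ω₁ * h)
    (ε ε' : ℂ) (hε : ε = 1 ∨ ε = -1) (hε' : ε' = 1 ∨ ε' = -1) (z₁ z₂ : ℂ)
    (h0 : th1 τ ((ε * z₁ + ε' * z₂) / (2 * ω₁)) ≠ 0)
    (hp : th1 τ ((ε * z₁ + ε' * z₂) / (2 * ω₁) + h) ≠ 0) (G : ℂ) :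
    exp (η₁ * (z₁^2 + z₂^2) / ω₁) *
      (th1 τ (ε * (z₁ / (2 * ω₁)) + ε' * (z₂ / (2 * ω₁)) - h)
        / th1 τ (ε * (z₁ / (2 * ω₁)) + ε' * (z₂ / (2 * ω₁)) + h)
        * (exp (-(4 * ω₁ * η₁ * ((z₁ / (2 * ω₁) + ε * h)^2 + (z₂ / (2 * ω₁) + ε' * h)^2))) * G))
    = exp (-(2 * η₁ * γ^2 / ω₁)) *
        (vD τ ω₁ η₁ γ (ε * z₁ + ε' * z₂) * vD τ ω₁ η₁ γ (ε * z₁ + ε' * z₂ + γ) * G) := by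
  subst hγ
  unfold vD
  have e1 : (ε * z₁ + ε' * z₂ - 2 * ω₁ * h) / (2 * ω₁)
      = ε * (z₁ / (2 * ω₁)) + ε' * (z₂ / (2 * ω₁)) - h := by field_simp; try ring
  have e2 : (ε * z₁ + ε' * z₂) / (2 * ω₁)
      = ε * (z₁ / (2 * ω₁)) + ε' * (z₂ / (2 * ω₁)) := by field_simp
  have e3 : (ε * z₁ + ε' * z₂ + 2 * ω₁ * h - 2 * ω₁ * h) / (2 * ω₁)
      = ε * (z₁ / (2 * ω₁)) + ε' * (z₂ / (2 * ω₁)) := by field_simp; try ring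
  have e4 : (ε * z₁ + ε' * z₂ + 2 * ω₁ * h) / (2 * ω₁)
      = ε * (z₁ / (2 * ω₁)) + ε' * (z₂ / (2 * ω₁)) + h := by field_simp; try ring
  rw [e2] at h0 hp
  rw [e1, e2, e3, e4]
  set w := ε * (z₁ / (2 * ω₁)) + ε' * (z₂ / (2 * ω₁)) with hw
  have key : exp (η₁ * (z₁^2 + z₂^2) / ω₁)
        * exp (-(4 * ω₁ * η₁ * ((z₁ / (2 * ω₁) + ε * h)^2 + (z₂ / (2 * ω₁) + ε' * h)^2)))
      = exp (-(2 * η₁ * (2 * ω₁ * h)^2 / ω₁))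
        * (exp (η₁ * (-(2 * (ε * z₁ + ε' * z₂) * (2 * ω₁ * h)) + (2 * ω₁ * h)^2) / (2 * ω₁))
          * exp (η₁ * (-(2 * (ε * z₁ + ε' * z₂ + 2 * ω₁ * h) * (2 * ω₁ * h)) + (2 * ω₁ * h)^2) / (2 * ω₁))) := by
    rw [← exp_add, ← exp_add, ← exp_add]
    congr 1
    rcases hε with rfl | rfl <;> rcases hε' with rfl | rfl <;> (field_simp; try ring)
  have hR : exp (η₁ * (-(2 * (ε * z₁ + ε' * z₂) * (2 * ω₁ * h)) + (2 * ω₁ * h)^2) / (2 * ω₁))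
          * th1 τ (w - h) / th1 τ w
        * (exp (η₁ * (-(2 * (ε * z₁ + ε' * z₂ + 2 * ω₁ * h) * (2 * ω₁ * h)) + (2 * ω₁ * h)^2) / (2 * ω₁))
            * th1 τ w / th1 τ (w + h))
      = (exp (η₁ * (-(2 * (ε * z₁ + ε' * z₂) * (2 * ω₁ * h)) + (2 * ω₁ * h)^2) / (2 * ω₁))
          * exp (η₁ * (-(2 * (ε * z₁ + ε' * z₂ + 2 * ω₁ * h) * (2 * ω₁ * h)) + (2 * ω₁ * h)^2) / (2 * ω₁)))
        * (th1 τ (w - h) / th1 τ (w + h)) := by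
    field_simp; try ring
  rw [hR]
  linear_combination (th1 τ (w - h) / th1 τ (w + h) * G) * key

theorem termB (τ ω₁ η₁ h γ : ℂ) (hω₁ : ω₁ ≠ 0) (hγ : γ = 2 * ω₁ * h)
    (ε ε' : ℂ) (z₁ z₂ : ℂ)
    (h0 : th1 τ ((ε * z₁ + ε' * z₂) / (2 * ω₁)) ≠ 0)
    (hp : th1 τ ((ε * z₁ + ε' * z₂) / (2 * ω₁) + h) ≠ 0) :
    exp (η₁ * (z₁^2 + z₂^2) / ω₁) *
      (th1 τ (ε * (z₁ / (2 * ω₁)) + ε' * (z₂ / (2 * ω₁)) - h)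
        * th1 τ (ε * (z₁ / (2 * ω₁)) + ε' * (z₂ / (2 * ω₁)) + 2 * h)
        / (th1 τ (ε * (z₁ / (2 * ω₁)) + ε' * (z₂ / (2 * ω₁)))
            * th1 τ (ε * (z₁ / (2 * ω₁)) + ε' * (z₂ / (2 * ω₁)) + h))
        * exp (-(4 * ω₁ * η₁ * ((z₁ / (2 * ω₁))^2 + (z₂ / (2 * ω₁))^2))))
    = exp (-(2 * η₁ * γ^2 / ω₁)) *
        (vD τ ω₁ η₁ γ (ε * z₁ + ε' * z₂) * vD τ ω₁ η₁ γ (-(ε * z₁) - ε' * z₂ - γ)) := by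
  subst hγ
  unfold vD
  have e1 : (ε * z₁ + ε' * z₂ - 2 * ω₁ * h) / (2 * ω₁)
      = ε * (z₁ / (2 * ω₁)) + ε' * (z₂ / (2 * ω₁)) - h := by field_simp; try ring
  have e2 : (ε * z₁ + ε' * z₂) / (2 * ω₁)
      = ε * (z₁ / (2 * ω₁)) + ε' * (z₂ / (2 * ω₁)) := by field_simp
  have e5 : (-(ε * z₁) - ε' * z₂ - 2 * ω₁ * h - 2 * ω₁ * h) / (2 * ω₁)
      = -(ε * (z₁ / (2 * ω₁)) + ε' * (z₂ / (2 * ω₁)) + 2 * h) := by field_simp; try ring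
  have e6 : (-(ε * z₁) - ε' * z₂ - 2 * ω₁ * h) / (2 * ω₁)
      = -(ε * (z₁ / (2 * ω₁)) + ε' * (z₂ / (2 * ω₁)) + h) := by field_simp; try ring
  rw [e2] at h0 hp
  rw [e1, e2, e5, e6, th1_neg, th1_neg]
  set w := ε * (z₁ / (2 * ω₁)) + ε' * (z₂ / (2 * ω₁)) with hw
  have key : exp (η₁ * (z₁^2 + z₂^2) / ω₁)
        * exp (-(4 * ω₁ * η₁ * ((z₁ / (2 * ω₁))^2 + (z₂ / (2 * ω₁))^2)))
      = exp (-(2 * η₁ * (2 * ω₁ * h)^2 / ω₁))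
        * (exp (η₁ * (-(2 * (ε * z₁ + ε' * z₂) * (2 * ω₁ * h)) + (2 * ω₁ * h)^2) / (2 * ω₁))
          * exp (η₁ * (-(2 * (-(ε * z₁) - ε' * z₂ - 2 * ω₁ * h) * (2 * ω₁ * h)) + (2 * ω₁ * h)^2) / (2 * ω₁))) := by
    rw [← exp_add, ← exp_add, ← exp_add]
    congr 1
    field_simp; try ring
  have hR : exp (η₁ * (-(2 * (ε * z₁ + ε' * z₂) * (2 * ω₁ * h)) + (2 * ω₁ * h)^2) / (2 * ω₁))
          * th1 τ (w - h) / th1 τ w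
        * (exp (η₁ * (-(2 * (-(ε * z₁) - ε' * z₂ - 2 * ω₁ * h) * (2 * ω₁ * h)) + (2 * ω₁ * h)^2) / (2 * ω₁))
            * -th1 τ (w + 2 * h) / -th1 τ (w + h))
      = (exp (η₁ * (-(2 * (ε * z₁ + ε' * z₂) * (2 * ω₁ * h)) + (2 * ω₁ * h)^2) / (2 * ω₁))
          * exp (η₁ * (-(2 * (-(ε * z₁) - ε' * z₂ - 2 * ω₁ * h) * (2 * ω₁ * h)) + (2 * ω₁ * h)^2) / (2 * ω₁)))
        * (th1 τ (w - h) * th1 τ (w + 2 * h) / (th1 τ w * th1 τ (w + h))) := by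
    field_simp; try ring
  rw [hR]
  linear_combination (th1 τ (w - h) * th1 τ (w + 2 * h) / (th1 τ w * th1 τ (w + h))) * key



/-- Theorem 3 ("connect"), second identity: under the gauge transformation
`φ(f)(x) = exp(η₁(x₁²+x₂²)/ω₁) f(x/2ω₁)`, the operator `M̃₂` is conjugate to
van Diejen's `H̄₂ + 2H̄₁`, up to the constant `exp(−2η₁γ²/ω₁)`. -/
theorem stmt_10 (τ : ℂ) (hτ : 0 < τ.im) (ω₁ : ℂ) (hω₁ : ω₁ ≠ 0) (η₁ h γ : ℂ)
    (hγ : γ = 2 * ω₁ * h) (g : ℂ × ℂ → ℂ) (x : ℂ × ℂ)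
    (hden : ∀ ε ∈ ({1, -1} : Finset ℤ), ∀ ε' ∈ ({1, -1} : Finset ℤ),
      th1 τ (((ε : ℂ) * x.1 + (ε' : ℂ) * x.2) / (2 * ω₁)) ≠ 0 ∧
      th1 τ (((ε : ℂ) * x.1 + (ε' : ℂ) * x.2) / (2 * ω₁) + h) ≠ 0 ∧
      th1 τ (((ε : ℂ) * x.1 + (ε' : ℂ) * x.2) / (2 * ω₁) - h) ≠ 0) :
    exp (η₁ * (x.1^2 + x.2^2) / ω₁)
        * M2t τ h (fun p => exp (-(4 * ω₁ * η₁ * (p.1^2 + p.2^2)))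
            * g (2 * ω₁ * p.1, 2 * ω₁ * p.2)) (x.1 / (2 * ω₁), x.2 / (2 * ω₁))
      = exp (-(2 * η₁ * γ^2 / ω₁))
          * (H2bar τ ω₁ η₁ γ g x + 2 * H1bar τ ω₁ η₁ γ g x) := by
  have c1 : ∀ a ε : ℂ, 2 * ω₁ * (a / (2 * ω₁) + ε * h) = a + ε * γ := by
    intro a ε; rw [hγ]; field_simp
  have c0 : ∀ a : ℂ, 2 * ω₁ * (a / (2 * ω₁)) = a := by
    intro a; field_simp
  have d11 := hden 1 (by simp) 1 (by simp)
  have d12 := hden 1 (by simp) (-1) (by simp)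
  have d21 := hden (-1) (by simp) 1 (by simp)
  have d22 := hden (-1) (by simp) (-1) (by simp)
  simp only [Int.cast_one, Int.cast_neg] at d11 d12 d21 d22
  simp only [M2t, H2bar, H1bar, Finset.sum_pair (show (1:ℤ) ≠ -1 by decide),
    Int.cast_one, Int.cast_neg, c1, c0, Prod.mk.eta]
  linear_combination
    termA τ ω₁ η₁ h γ hω₁ hγ 1 1 (Or.inl rfl) (Or.inl rfl) x.1 x.2 d11.1 d11.2.1
      (g (x.1 + 1 * γ, x.2 + 1 * γ))
    + termA τ ω₁ η₁ h γ hω₁ hγ 1 (-1) (Or.inl rfl) (Or.inr rfl) x.1 x.2 d12.1 d12.2.1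
      (g (x.1 + 1 * γ, x.2 + -1 * γ))
    + termA τ ω₁ η₁ h γ hω₁ hγ (-1) 1 (Or.inr rfl) (Or.inl rfl) x.1 x.2 d21.1 d21.2.1
      (g (x.1 + -1 * γ, x.2 + 1 * γ))
    + termA τ ω₁ η₁ h γ hω₁ hγ (-1) (-1) (Or.inr rfl) (Or.inr rfl) x.1 x.2 d22.1 d22.2.1
      (g (x.1 + -1 * γ, x.2 + -1 * γ))
    + g x * termB τ ω₁ η₁ h γ hω₁ hγ 1 1 x.1 x.2 d11.1 d11.2.1
    + g x * termB τ ω₁ η₁ h γ hω₁ hγ 1 (-1) x.1 x.2 d12.1 d12.2.1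
    + g x * termB τ ω₁ η₁ h γ hω₁ hγ (-1) 1 x.1 x.2 d21.1 d21.2.1
    + g x * termB τ ω₁ η₁ h γ hω₁ hγ (-1) (-1) x.1 x.2 d22.1 d22.2.1
end

section
/- Set Δ(λ₁,λ₂) = θ(λ₊)·θ(λ₋). For every function f : ℂ² → ℂ that is holomorphic near a point λ = (λ₁,λ₂) with θ(λ₊) ≠ 0 and θ(λ₋) ≠ 0, one has the gauge-transformation identity (M_{1,2}(Δ·f))(λ) = Δ(λ)·[ (∂₁² + ∂₂²)f(λ) + 4( (log θ)″(λ₊) + (log θ)″(λ₋) )·f(λ) ], where M_{1,2} is the second-order differential operator (M_{1,2}g)(λ) = (∂₁² + ∂₂²)g(λ) − 2[θ′(λ₊)/θ(λ₊) + θ′(λ₋)/θ(λ₋)]·∂₁g(λ) − 2[θ′(λ₊)/θ(λ₊) − θ′(λ₋)/θ(λ₋)]·∂₂g(λ) + 2[θ″(λ₊)/θ(λ₊) + θ″(λ₋)/θ(λ₋)]·g(λ), and (log θ)″(z) = θ″(z)/θ(z) − (θ′(z)/θ(z))². Thus the differential limit of the system is, after conjugation by Δ, the Schrödinger operator ∂₁²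 + ∂₂² + 4((log θ₁)″(λ₁+λ₂) + (log θ₁)″(λ₁−λ₂)) of Inozemtsev type. -/
open Complex

/-- The partial derivative `∂₁`. -/
noncomputable def D1 (f : ℂ × ℂ → ℂ) (x : ℂ × ℂ) : ℂ := fderiv ℂ f x (1, 0)

/-- The partial derivative `∂₂`. -/
noncomputable def D2 (f : ℂ × ℂ → ℂ) (x : ℂ × ℂ) : ℂ := fderiv ℂ f x (0, 1)

/-- The second-order differential operator `M_{1,2}` appearing in the
differential limit of `M̃₁`. -/
noncomputable def M12 (τ : ℂ) (f : ℂ × ℂ → ℂ) (l : ℂ × ℂ) : ℂ :=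
  D1 (D1 f) l + D2 (D2 f) l
  - 2 * (deriv (th1 τ) (l.1 + l.2) / th1 τ (l.1 + l.2)
        + deriv (th1 τ) (l.1 - l.2) / th1 τ (l.1 - l.2)) * D1 f l
  - 2 * (deriv (th1 τ) (l.1 + l.2) / th1 τ (l.1 + l.2)
        - deriv (th1 τ) (l.1 - l.2) / th1 τ (l.1 - l.2)) * D2 f l
  + 2 * (deriv (deriv (th1 τ)) (l.1 + l.2) / th1 τ (l.1 + l.2)
        + deriv (deriv (th1 τ)) (l.1 - l.2) / th1 τ (l.1 - l.2)) * f l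

/-- The second logarithmic derivative `(log θ)″(z)`. -/
noncomputable def logTh'' (τ z : ℂ) : ℂ :=
  deriv (deriv (th1 τ)) z / th1 τ z - (deriv (th1 τ) z / th1 τ z)^2

lemma th1_eq_s15 (τ z : ℂ) : th1 τ z =
    exp ((Real.pi : ℂ) * I * (z + 1/2 + τ/4)) * jacobiTheta₂ (z + (1 + τ)/2) τ := by
  unfold th1 jacobiTheta₂ jacobiTheta₂_term
  rw [← tsum_mul_left]
  refine tsum_congr fun k => ?_
  rw [← Complex.exp_add]
  congr 1
  ring

lemma th1_diff (τ : ℂ) (hτ : 0 < τ.im) : Differentiable ℂ (th1 τ) := by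
  have h : th1 τ = fun z => exp ((Real.pi : ℂ) * I * (z + 1/2 + τ/4)) *
      jacobiTheta₂ (z + (1 + τ)/2) τ := funext (th1_eq_s15 τ)
  rw [h]
  refine Differentiable.mul ?_ ?_
  · exact Complex.differentiable_exp.comp (by fun_prop)
  · intro z
    exact (differentiableAt_jacobiTheta₂_fst _ hτ).comp z (differentiableAt_id.add_const _)

section toolkit

lemma hasFDerivAt_compP (φ : ℂ → ℂ) (x : ℂ × ℂ) (hφ : DifferentiableAt ℂ φ (x.1 + x.2)) :
    HasFDerivAt (fun y : ℂ × ℂ => φ (y.1 + y.2))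
      (deriv φ (x.1 + x.2) • (ContinuousLinearMap.fst ℂ ℂ ℂ + ContinuousLinearMap.snd ℂ ℂ ℂ)) x :=
  hφ.hasDerivAt.comp_hasFDerivAt x
    (ContinuousLinearMap.fst ℂ ℂ ℂ + ContinuousLinearMap.snd ℂ ℂ ℂ).hasFDerivAt

lemma hasFDerivAt_compM (φ : ℂ → ℂ) (x : ℂ × ℂ) (hφ : DifferentiableAt ℂ φ (x.1 - x.2)) :
    HasFDerivAt (fun y : ℂ × ℂ => φ (y.1 - y.2))
      (deriv φ (x.1 - x.2) • (ContinuousLinearMap.fst ℂ ℂ ℂ - ContinuousLinearMap.snd ℂ ℂ ℂ)) x :=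
  hφ.hasDerivAt.comp_hasFDerivAt x
    (ContinuousLinearMap.fst ℂ ℂ ℂ - ContinuousLinearMap.snd ℂ ℂ ℂ).hasFDerivAt

lemma D1_compP (φ : ℂ → ℂ) (x : ℂ × ℂ) (hφ : DifferentiableAt ℂ φ (x.1 + x.2)) :
    D1 (fun y : ℂ × ℂ => φ (y.1 + y.2)) x = deriv φ (x.1 + x.2) := by
  unfold D1; rw [(hasFDerivAt_compP φ x hφ).fderiv]; simp

lemma D2_compP (φ : ℂ → ℂ) (x : ℂ × ℂ) (hφ : DifferentiableAt ℂ φ (x.1 + x.2)) :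
    D2 (fun y : ℂ × ℂ => φ (y.1 + y.2)) x = deriv φ (x.1 + x.2) := by
  unfold D2; rw [(hasFDerivAt_compP φ x hφ).fderiv]; simp

lemma D1_compM (φ : ℂ → ℂ) (x : ℂ × ℂ) (hφ : DifferentiableAt ℂ φ (x.1 - x.2)) :
    D1 (fun y : ℂ × ℂ => φ (y.1 - y.2)) x = deriv φ (x.1 - x.2) := by
  unfold D1; rw [(hasFDerivAt_compM φ x hφ).fderiv]; simp

lemma D2_compM (φ : ℂ → ℂ) (x : ℂ × ℂ) (hφ : DifferentiableAt ℂ φ (x.1 - x.2)) :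
    D2 (fun y : ℂ × ℂ => φ (y.1 - y.2)) x = -deriv φ (x.1 - x.2) := by
  unfold D2; rw [(hasFDerivAt_compM φ x hφ).fderiv]; simp

lemma D1_mul {A B : ℂ × ℂ → ℂ} {x : ℂ × ℂ} (hA : DifferentiableAt ℂ A x)
    (hB : DifferentiableAt ℂ B x) :
    D1 (fun y => A y * B y) x = D1 A x * B x + A x * D1 B x := by
  unfold D1; rw [fderiv_fun_mul hA hB]
  simp only [ContinuousLinearMap.add_apply, ContinuousLinearMap.smul_apply, smul_eq_mul]; ring

lemma D2_mul {A B : ℂ × ℂ → ℂ} {x : ℂ × ℂ} (hA : DifferentiableAt ℂ A x)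
    (hB : DifferentiableAt ℂ B x) :
    D2 (fun y => A y * B y) x = D2 A x * B x + A x * D2 B x := by
  unfold D2; rw [fderiv_fun_mul hA hB]
  simp only [ContinuousLinearMap.add_apply, ContinuousLinearMap.smul_apply, smul_eq_mul]; ring

lemma D1_add {A B : ℂ × ℂ → ℂ} {x : ℂ × ℂ} (hA : DifferentiableAt ℂ A x)
    (hB : DifferentiableAt ℂ B x) :
    D1 (fun y => A y + B y) x = D1 A x + D1 B x := by
  unfold D1; rw [fderiv_fun_add hA hB]; simp

lemma D2_add {A B : ℂ × ℂ → ℂ} {x : ℂ × ℂ} (hA : DifferentiableAt ℂ A x)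
    (hB : DifferentiableAt ℂ B x) :
    D2 (fun y => A y + B y) x = D2 A x + D2 B x := by
  unfold D2; rw [fderiv_fun_add hA hB]; simp

lemma D1_sub {A B : ℂ × ℂ → ℂ} {x : ℂ × ℂ} (hA : DifferentiableAt ℂ A x)
    (hB : DifferentiableAt ℂ B x) :
    D1 (fun y => A y - B y) x = D1 A x - D1 B x := by
  unfold D1; rw [fderiv_fun_sub hA hB]; simp

lemma D2_sub {A B : ℂ × ℂ → ℂ} {x : ℂ × ℂ} (hA : DifferentiableAt ℂ A x)
    (hB : DifferentiableAt ℂ B x) :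
    D2 (fun y => A y - B y) x = D2 A x - D2 B x := by
  unfold D2; rw [fderiv_fun_sub hA hB]; simp

end toolkit

/-- Conjugating the differential limit `M_{1,2}` by `Δ(λ) = θ(λ₊)θ(λ₋)` yields
the Inozemtsev-type Schrödinger operator
`∂₁² + ∂₂² + 4((log θ₁)″(λ₊) + (log θ₁)″(λ₋))`. -/
theorem stmt_15 (τ : ℂ) (hτ : 0 < τ.im) (f : ℂ × ℂ → ℂ) (l : ℂ × ℂ)
    (hf : AnalyticAt ℂ f l)
    (hp : th1 τ (l.1 + l.2) ≠ 0) (hm : th1 τ (l.1 - l.2) ≠ 0) :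
    M12 τ (fun x => th1 τ (x.1 + x.2) * th1 τ (x.1 - x.2) * f x) l
      = th1 τ (l.1 + l.2) * th1 τ (l.1 - l.2) *
          (D1 (D1 f) l + D2 (D2 f) l
            + 4 * (logTh'' τ (l.1 + l.2) + logTh'' τ (l.1 - l.2)) * f l) := by
  simp only [M12, logTh'']
  set g := th1 τ with hgdef
  have hgd : Differentiable ℂ g := th1_diff τ hτ
  have hga : ∀ z, AnalyticAt ℂ g z := fun z => hgd.analyticAt z
  have hg'd : Differentiable ℂ (deriv g) := by
    have h1 : deriv g = fun z => (fderiv ℂ g z) 1 := funext fun z => fderiv_apply_one_eq_deriv.symm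
    rw [h1]
    exact fun z => ((hga z).fderiv.differentiableAt).clm_apply (differentiableAt_const _)
  have hsd : Differentiable ℂ (fun y : ℂ × ℂ => y.1 + y.2) := by fun_prop
  have hmd : Differentiable ℂ (fun y : ℂ × ℂ => y.1 - y.2) := by fun_prop
  have hPg : Differentiable ℂ (fun y : ℂ × ℂ => g (y.1 + y.2)) := hgd.comp hsd
  have hMg : Differentiable ℂ (fun y : ℂ × ℂ => g (y.1 - y.2)) := hgd.comp hmd
  have hPg' : Differentiable ℂ (fun y : ℂ × ℂ => deriv g (y.1 + y.2)) := hg'd.comp hsd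
  have hMg' : Differentiable ℂ (fun y : ℂ × ℂ => deriv g (y.1 - y.2)) := hg'd.comp hmd
  have hD1f : DifferentiableAt ℂ (D1 f) l :=
    (hf.fderiv.differentiableAt).clm_apply (differentiableAt_const ((1 : ℂ), (0 : ℂ)))
  have hD2f : DifferentiableAt ℂ (D2 f) l :=
    (hf.fderiv.differentiableAt).clm_apply (differentiableAt_const ((0 : ℂ), (1 : ℂ)))
  have hfd : ∀ᶠ x in nhds l, DifferentiableAt ℂ f x :=
    hf.eventually_analyticAt.mono fun x hx => hx.differentiableAt
  -- first derivatives of Δ·f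
  have e1 : ∀ x : ℂ × ℂ, DifferentiableAt ℂ f x →
      D1 (fun y => g (y.1 + y.2) * g (y.1 - y.2) * f y) x
        = (deriv g (x.1 + x.2) * g (x.1 - x.2) + g (x.1 + x.2) * deriv g (x.1 - x.2)) * f x
          + g (x.1 + x.2) * g (x.1 - x.2) * D1 f x := by
    intro x hx
    have h1 : D1 (fun y : ℂ × ℂ => g (y.1 + y.2) * g (y.1 - y.2) * f y) x
        = D1 (fun y : ℂ × ℂ => g (y.1 + y.2) * g (y.1 - y.2)) x * f x
          + g (x.1 + x.2) * g (x.1 - x.2) * D1 f x := D1_mul ((hPg x).mul (hMg x)) hx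
    have h2 : D1 (fun y : ℂ × ℂ => g (y.1 + y.2) * g (y.1 - y.2)) x
        = D1 (fun y : ℂ × ℂ => g (y.1 + y.2)) x * g (x.1 - x.2)
          + g (x.1 + x.2) * D1 (fun y : ℂ × ℂ => g (y.1 - y.2)) x := D1_mul (hPg x) (hMg x)
    rw [h1, h2, D1_compP g x (hgd _), D1_compM g x (hgd _)]
  have e2 : ∀ x : ℂ × ℂ, DifferentiableAt ℂ f x →
      D2 (fun y => g (y.1 + y.2) * g (y.1 - y.2) * f y) x
        = (deriv g (x.1 + x.2) * g (x.1 - x.2) - g (x.1 + x.2) * deriv g (x.1 - x.2)) * f x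
          + g (x.1 + x.2) * g (x.1 - x.2) * D2 f x := by
    intro x hx
    have h1 : D2 (fun y : ℂ × ℂ => g (y.1 + y.2) * g (y.1 - y.2) * f y) x
        = D2 (fun y : ℂ × ℂ => g (y.1 + y.2) * g (y.1 - y.2)) x * f x
          + g (x.1 + x.2) * g (x.1 - x.2) * D2 f x := D2_mul ((hPg x).mul (hMg x)) hx
    have h2 : D2 (fun y : ℂ × ℂ => g (y.1 + y.2) * g (y.1 - y.2)) x
        = D2 (fun y : ℂ × ℂ => g (y.1 + y.2)) x * g (x.1 - x.2)
          + g (x.1 + x.2) * D2 (fun y : ℂ × ℂ => g (y.1 - y.2)) x := D2_mul (hPg x) (hMg x)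
    rw [h1, h2, D2_compP g x (hgd _), D2_compM g x (hgd _)]
    ring
  have E1 := e1 l hf.differentiableAt
  have E2 := e2 l hf.differentiableAt
  -- second derivative, direction 1
  have hevent1 : D1 (fun y => g (y.1 + y.2) * g (y.1 - y.2) * f y) =ᶠ[nhds l]
      (fun x => (deriv g (x.1 + x.2) * g (x.1 - x.2) + g (x.1 + x.2) * deriv g (x.1 - x.2)) * f x
        + g (x.1 + x.2) * g (x.1 - x.2) * D1 f x) := hfd.mono e1
  have hevent2 : D2 (fun y => g (y.1 + y.2) * g (y.1 - y.2) * f y) =ᶠ[nhds l]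
      (fun x => (deriv g (x.1 + x.2) * g (x.1 - x.2) - g (x.1 + x.2) * deriv g (x.1 - x.2)) * f x
        + g (x.1 + x.2) * g (x.1 - x.2) * D2 f x) := hfd.mono e2
  have E11 : D1 (D1 (fun y => g (y.1 + y.2) * g (y.1 - y.2) * f y)) l
      = (deriv (deriv g) (l.1 + l.2) * g (l.1 - l.2)
          + 2 * deriv g (l.1 + l.2) * deriv g (l.1 - l.2)
          + g (l.1 + l.2) * deriv (deriv g) (l.1 - l.2)) * f l
        + 2 * (deriv g (l.1 + l.2) * g (l.1 - l.2) + g (l.1 + l.2) * deriv g (l.1 - l.2)) * D1 f l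
        + g (l.1 + l.2) * g (l.1 - l.2) * D1 (D1 f) l := by
    have h0 : D1 (D1 (fun y => g (y.1 + y.2) * g (y.1 - y.2) * f y)) l
        = D1 (fun x => (deriv g (x.1 + x.2) * g (x.1 - x.2)
            + g (x.1 + x.2) * deriv g (x.1 - x.2)) * f x
            + g (x.1 + x.2) * g (x.1 - x.2) * D1 f x) l := by
      show fderiv ℂ (D1 (fun y => g (y.1 + y.2) * g (y.1 - y.2) * f y)) l (1, 0) = _
      rw [hevent1.fderiv_eq]; rfl
    have hA : DifferentiableAt ℂ (fun x : ℂ × ℂ => deriv g (x.1 + x.2) * g (x.1 - x.2)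
        + g (x.1 + x.2) * deriv g (x.1 - x.2)) l :=
      ((hPg' l).mul (hMg l)).add ((hPg l).mul (hMg' l))
    have h1 : D1 (fun x : ℂ × ℂ => (deriv g (x.1 + x.2) * g (x.1 - x.2)
          + g (x.1 + x.2) * deriv g (x.1 - x.2)) * f x
          + g (x.1 + x.2) * g (x.1 - x.2) * D1 f x) l
        = D1 (fun x : ℂ × ℂ => (deriv g (x.1 + x.2) * g (x.1 - x.2)
            + g (x.1 + x.2) * deriv g (x.1 - x.2)) * f x) l
          + D1 (fun x : ℂ × ℂ => g (x.1 + x.2) * g (x.1 - x.2) * D1 f x) l :=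
      D1_add (hA.mul hf.differentiableAt) (((hPg l).mul (hMg l)).mul hD1f)
    have h2 : D1 (fun x : ℂ × ℂ => (deriv g (x.1 + x.2) * g (x.1 - x.2)
          + g (x.1 + x.2) * deriv g (x.1 - x.2)) * f x) l
        = D1 (fun x : ℂ × ℂ => deriv g (x.1 + x.2) * g (x.1 - x.2)
            + g (x.1 + x.2) * deriv g (x.1 - x.2)) l * f l
          + (deriv g (l.1 + l.2) * g (l.1 - l.2) + g (l.1 + l.2) * deriv g (l.1 - l.2)) * D1 f l :=
      D1_mul hA hf.differentiableAt
    have h3 : D1 (fun x : ℂ × ℂ => deriv g (x.1 + x.2) * g (x.1 - x.2)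
          + g (x.1 + x.2) * deriv g (x.1 - x.2)) l
        = D1 (fun x : ℂ × ℂ => deriv g (x.1 + x.2) * g (x.1 - x.2)) l
          + D1 (fun x : ℂ × ℂ => g (x.1 + x.2) * deriv g (x.1 - x.2)) l :=
      D1_add ((hPg' l).mul (hMg l)) ((hPg l).mul (hMg' l))
    have h4 : D1 (fun x : ℂ × ℂ => deriv g (x.1 + x.2) * g (x.1 - x.2)) l
        = D1 (fun x : ℂ × ℂ => deriv g (x.1 + x.2)) l * g (l.1 - l.2)
          + deriv g (l.1 + l.2) * D1 (fun x : ℂ × ℂ => g (x.1 - x.2)) l :=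
      D1_mul (hPg' l) (hMg l)
    have h5 : D1 (fun x : ℂ × ℂ => g (x.1 + x.2) * deriv g (x.1 - x.2)) l
        = D1 (fun x : ℂ × ℂ => g (x.1 + x.2)) l * deriv g (l.1 - l.2)
          + g (l.1 + l.2) * D1 (fun x : ℂ × ℂ => deriv g (x.1 - x.2)) l :=
      D1_mul (hPg l) (hMg' l)
    have h6 : D1 (fun x : ℂ × ℂ => g (x.1 + x.2) * g (x.1 - x.2) * D1 f x) l
        = D1 (fun x : ℂ × ℂ => g (x.1 + x.2) * g (x.1 - x.2)) l * D1 f l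
          + g (l.1 + l.2) * g (l.1 - l.2) * D1 (D1 f) l :=
      D1_mul ((hPg l).mul (hMg l)) hD1f
    have h7 : D1 (fun x : ℂ × ℂ => g (x.1 + x.2) * g (x.1 - x.2)) l
        = D1 (fun x : ℂ × ℂ => g (x.1 + x.2)) l * g (l.1 - l.2)
          + g (l.1 + l.2) * D1 (fun x : ℂ × ℂ => g (x.1 - x.2)) l :=
      D1_mul (hPg l) (hMg l)
    rw [h0, h1, h2, h3, h4, h5, h6, h7, D1_compP g l (hgd _), D1_compM g l (hgd _),
      D1_compP (deriv g) l (hg'd _), D1_compM (deriv g) l (hg'd _)]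
    ring
  have E22 : D2 (D2 (fun y => g (y.1 + y.2) * g (y.1 - y.2) * f y)) l
      = (deriv (deriv g) (l.1 + l.2) * g (l.1 - l.2)
          - 2 * deriv g (l.1 + l.2) * deriv g (l.1 - l.2)
          + g (l.1 + l.2) * deriv (deriv g) (l.1 - l.2)) * f l
        + 2 * (deriv g (l.1 + l.2) * g (l.1 - l.2) - g (l.1 + l.2) * deriv g (l.1 - l.2)) * D2 f l
        + g (l.1 + l.2) * g (l.1 - l.2) * D2 (D2 f) l := by
    have h0 : D2 (D2 (fun y => g (y.1 + y.2) * g (y.1 - y.2) * f y)) l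
        = D2 (fun x => (deriv g (x.1 + x.2) * g (x.1 - x.2)
            - g (x.1 + x.2) * deriv g (x.1 - x.2)) * f x
            + g (x.1 + x.2) * g (x.1 - x.2) * D2 f x) l := by
      show fderiv ℂ (D2 (fun y => g (y.1 + y.2) * g (y.1 - y.2) * f y)) l (0, 1) = _
      rw [hevent2.fderiv_eq]; rfl
    have hA : DifferentiableAt ℂ (fun x : ℂ × ℂ => deriv g (x.1 + x.2) * g (x.1 - x.2)
        - g (x.1 + x.2) * deriv g (x.1 - x.2)) l :=
      ((hPg' l).mul (hMg l)).sub ((hPg l).mul (hMg' l))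
    have h1 : D2 (fun x : ℂ × ℂ => (deriv g (x.1 + x.2) * g (x.1 - x.2)
          - g (x.1 + x.2) * deriv g (x.1 - x.2)) * f x
          + g (x.1 + x.2) * g (x.1 - x.2) * D2 f x) l
        = D2 (fun x : ℂ × ℂ => (deriv g (x.1 + x.2) * g (x.1 - x.2)
            - g (x.1 + x.2) * deriv g (x.1 - x.2)) * f x) l
          + D2 (fun x : ℂ × ℂ => g (x.1 + x.2) * g (x.1 - x.2) * D2 f x) l :=
      D2_add (hA.mul hf.differentiableAt) (((hPg l).mul (hMg l)).mul hD2f)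
    have h2 : D2 (fun x : ℂ × ℂ => (deriv g (x.1 + x.2) * g (x.1 - x.2)
          - g (x.1 + x.2) * deriv g (x.1 - x.2)) * f x) l
        = D2 (fun x : ℂ × ℂ => deriv g (x.1 + x.2) * g (x.1 - x.2)
            - g (x.1 + x.2) * deriv g (x.1 - x.2)) l * f l
          + (deriv g (l.1 + l.2) * g (l.1 - l.2) - g (l.1 + l.2) * deriv g (l.1 - l.2)) * D2 f l :=
      D2_mul hA hf.differentiableAt
    have h3 : D2 (fun x : ℂ × ℂ => deriv g (x.1 + x.2) * g (x.1 - x.2)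
          - g (x.1 + x.2) * deriv g (x.1 - x.2)) l
        = D2 (fun x : ℂ × ℂ => deriv g (x.1 + x.2) * g (x.1 - x.2)) l
          - D2 (fun x : ℂ × ℂ => g (x.1 + x.2) * deriv g (x.1 - x.2)) l :=
      D2_sub ((hPg' l).mul (hMg l)) ((hPg l).mul (hMg' l))
    have h4 : D2 (fun x : ℂ × ℂ => deriv g (x.1 + x.2) * g (x.1 - x.2)) l
        = D2 (fun x : ℂ × ℂ => deriv g (x.1 + x.2)) l * g (l.1 - l.2)
          + deriv g (l.1 + l.2) * D2 (fun x : ℂ × ℂ => g (x.1 - x.2)) l :=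
      D2_mul (hPg' l) (hMg l)
    have h5 : D2 (fun x : ℂ × ℂ => g (x.1 + x.2) * deriv g (x.1 - x.2)) l
        = D2 (fun x : ℂ × ℂ => g (x.1 + x.2)) l * deriv g (l.1 - l.2)
          + g (l.1 + l.2) * D2 (fun x : ℂ × ℂ => deriv g (x.1 - x.2)) l :=
      D2_mul (hPg l) (hMg' l)
    have h6 : D2 (fun x : ℂ × ℂ => g (x.1 + x.2) * g (x.1 - x.2) * D2 f x) l
        = D2 (fun x : ℂ × ℂ => g (x.1 + x.2) * g (x.1 - x.2)) l * D2 f l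
          + g (l.1 + l.2) * g (l.1 - l.2) * D2 (D2 f) l :=
      D2_mul ((hPg l).mul (hMg l)) hD2f
    have h7 : D2 (fun x : ℂ × ℂ => g (x.1 + x.2) * g (x.1 - x.2)) l
        = D2 (fun x : ℂ × ℂ => g (x.1 + x.2)) l * g (l.1 - l.2)
          + g (l.1 + l.2) * D2 (fun x : ℂ × ℂ => g (x.1 - x.2)) l :=
      D2_mul (hPg l) (hMg l)
    rw [h0, h1, h2, h3, h4, h5, h6, h7, D2_compP g l (hgd _), D2_compM g l (hgd _),
      D2_compP (deriv g) l (hg'd _), D2_compM (deriv g) l (hg'd _)]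
    ring
  rw [E11, E22, E1, E2]
  field_simp
  ring
end
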